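/- arXiv:1812.01256 — 8 statements merged into one kernel-verified Lean document; each statement's English description precedes it below -/
import Mathlib

section
/- Let M be a disconnected binary matroid and let X be a nonempty independent set in M. Then the Γ-extension matroid M^X is connected if and only if every component of M contains an element of X. -/
open Set
open scoped Classical

/-- A circuit of a matroid: a minimal dependent set. -/
def MatroidCircuit {α : Type*} (M : Matroid α) (C : Set α) : Prop :=
  M.Dep C ∧ ∀ D ⊂ C, ¬ M.Dep D

/-- A cocircuit of a matroid: a circuit of the dual matroid. -/
def MatroidCocircuit {α : Type*} (M : Matroid α) (C : Set α) : Prop :=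
  MatroidCircuit M✶ C

/-- The rank of a set in a matroid, as an extended natural number: the supremum of the
cardinalities of independent subsets of the set. -/
noncomputable def matroidERk {α : Type*} (M : Matroid α) (A : Set α) : ℕ∞ :=
  ⨆ I : {I : Set α // M.Indep I ∧ I ⊆ A}, (I : Set α).encard

/-- The rank of a matroid. -/
noncomputable def matroidERank {α : Type*} (M : Matroid α) : ℕ∞ :=
  matroidERk M M.E

/-- Deletion of a set from a matroid: the restriction to the complement. -/
def matroidDelete {α : Type*} (M : Matroid α) (Y : Set α) : Matroid α :=
  M.restrict (M.E \ Y)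

/-- A `k`-separation of a matroid `M`: a partition of the ground set into disjoint sets `A`, `B`
with `min (|A|, |B|) ≥ k` and `r(A) + r(B) - r(M) ≤ k - 1`. -/
def KSeparation {α : Type*} (M : Matroid α) (k : ℕ) (A B : Set α) : Prop :=
  Disjoint A B ∧ A ∪ B = M.E ∧ (k : ℕ∞) ≤ A.encard ∧ (k : ℕ∞) ≤ B.encard ∧
    matroidERk M A + matroidERk M B ≤ matroidERank M + ((k : ℕ∞) - 1)

/-- For `k ≥ 2`, a matroid is `k`-connected if it has no `(k-1)`-separation. -/
def KConnected {α : Type*} (M : Matroid α) (k : ℕ) : Prop :=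
  ∀ A B : Set α, ¬ KSeparation M (k - 1) A B

/-- The relation `e ~ f` iff `e = f` or some circuit contains both `e` and `f`. -/
def ConnRel {α : Type*} (M : Matroid α) (e f : α) : Prop :=
  e = f ∨ ∃ C, MatroidCircuit M C ∧ e ∈ C ∧ f ∈ C

/-- A component of a matroid: an equivalence class of the relation `ConnRel` on the
ground set. -/
def MatroidComponent {α : Type*} (M : Matroid α) (D : Set α) : Prop :=
  ∃ e ∈ M.E, D = {f ∈ M.E | ConnRel M e f}

/-- A matroid is connected if it has exactly one component. -/
def MatroidConnected {α : Type*} (M : Matroid α) : Prop :=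
  ∃! D : Set α, MatroidComponent M D

/-- `M` is the vector matroid over GF(2) of the matrix with column set `S` whose column at
`e ∈ S` is `A e`: a set is independent iff it is a subset of `S` whose columns are linearly
independent over GF(2). -/
def IsBinaryRep {α ρ : Type*} (M : Matroid α) (S : Set α) (A : α → ρ → ZMod 2) : Prop :=
  M.E = S ∧ ∀ I : Set α, M.Indep I ↔ I ⊆ S ∧ LinearIndependent (ZMod 2) (fun e : I => A e.1)

/-- The columns of the matrix `A^X` of the Γ-extension: for each index `i`, the new column
labelled `g i` agrees with the column of `x i` in the old rows and has entry `1` in the new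
row (indexed by `none`), while every old column keeps its entries in the old rows and has
entry `0` in the new row. -/
noncomputable def gammaCols {α ρ ι : Type*} (A : α → ρ → ZMod 2) (x g : ι → α) :
    α → Option ρ → ZMod 2 := fun e o =>
  if h : ∃ i, g i = e then o.elim 1 (fun r => A (x h.choose) r)
  else o.elim 0 (fun r => A e r)

section Binary

variable {α W : Type*} [AddCommGroup W] [Module (ZMod 2) W]

lemma char2_self_add (w : W) : w + w = 0 := by
  have h : (2 : ZMod 2) • w = 0 := by
    rw [show (2 : ZMod 2) = 0 by decide, zero_smul]
  rwa [two_smul] at h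

/-- A cycle: nonempty subset of the ground set whose columns sum to zero. -/
def BCyc (S : Set α) (A : α → W) (F : Finset α) : Prop :=
  ↑F ⊆ S ∧ F.Nonempty ∧ ∑ e ∈ F, A e = 0

/-- A circuit as a finset: a minimal cycle. -/
def BCirc (S : Set α) (A : α → W) (F : Finset α) : Prop :=
  BCyc S A F ∧ ∀ F' ⊆ F, BCyc S A F' → F' = F

lemma sum_sd (A : α → W) (s t : Finset α) :
    ∑ e ∈ (s \ t) ∪ (t \ s), A e = ∑ e ∈ s, A e + ∑ e ∈ t, A e := by
  classical
  have hdisj : Disjoint (s \ t) (t \ s) := by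
    exact disjoint_sdiff_sdiff
  rw [Finset.sum_union hdisj]
  have h1 : ∑ e ∈ s \ t, A e = ∑ e ∈ s, A e - ∑ e ∈ s ∩ t, A e := by
    rw [eq_sub_iff_add_eq, ← Finset.sum_union (Finset.disjoint_sdiff_inter s t),
      Finset.sdiff_union_inter]
  have h2 : ∑ e ∈ t \ s, A e = ∑ e ∈ t, A e - ∑ e ∈ t ∩ s, A e := by
    rw [eq_sub_iff_add_eq, ← Finset.sum_union (Finset.disjoint_sdiff_inter t s),
      Finset.sdiff_union_inter]
  rw [h1, h2, Finset.inter_comm t s]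
  have h3 := char2_self_add (∑ e ∈ s ∩ t, A e)
  have : ∀ a b c : W, c + c = 0 → a - c + (b - c) = a + b := by
    intro a b c h
    have : a - c + (b - c) = a + b - (c + c) := by abel
    rw [this, h, sub_zero]
  exact this _ _ _ h3

variable {M : Matroid α} {S : Set α} {A : α → W}

lemma brep_indep_iff (hE : M.E = S)
    (hI : ∀ I : Set α, M.Indep I ↔ I ⊆ S ∧ LinearIndependent (ZMod 2) (fun e : I => A e.1))
    (I : Set α) :
    M.Indep I ↔ I ⊆ S ∧ ∀ F : Finset α, ↑F ⊆ I → F.Nonempty → ∑ e ∈ F, A e ≠ 0 := by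
  rw [hI]
  constructor
  · rintro ⟨hIS, hli⟩
    refine ⟨hIS, fun F hFI hFne hsum => ?_⟩
    rw [linearIndependent_iff'] at hli
    obtain ⟨a, ha⟩ := hFne
    set emb : {y // y ∈ F} ↪ I :=
      ⟨fun p => ⟨p.1, hFI p.2⟩, fun p q h => Subtype.ext (congrArg Subtype.val h : (⟨p.1, hFI p.2⟩ : I).1 = (⟨q.1, hFI q.2⟩ : I).1)⟩ with hemb
    set s : Finset I := F.attach.map emb with hs
    have hsum' : ∑ i ∈ s, (fun _ : I => (1 : ZMod 2)) i • A i.1 = 0 := by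
      rw [hs, Finset.sum_map]
      simp only [one_smul, hemb, Function.Embedding.coeFn_mk]
      refine (Finset.sum_attach F (fun b => A b)).trans ?_
      exact hsum
    have hmem : (⟨a, hFI ha⟩ : I) ∈ s := by
      rw [hs, Finset.mem_map]
      exact ⟨⟨a, ha⟩, Finset.mem_attach _ _, rfl⟩
    have := hli s (fun _ => 1) hsum' ⟨a, hFI ha⟩ hmem
    exact one_ne_zero this
  · rintro ⟨hIS, hns⟩
    refine ⟨hIS, linearIndependent_iff'.2 fun s gc hsum i hi => ?_⟩
    by_contra hgi
    set t : Finset I := s.filter (fun j => gc j ≠ 0) with ht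
    have hcoef : ∀ j ∈ t, gc j = 1 := by
      intro j hj
      rw [ht, Finset.mem_filter] at hj
      have : ∀ c : ZMod 2, c ≠ 0 → c = 1 := by decide
      exact this _ hj.2
    have hsum2 : ∑ j ∈ t, A j.1 = 0 := by
      rw [← hsum, eq_comm]
      rw [← Finset.sum_filter_add_sum_filter_not s (fun j => gc j ≠ 0)]
      have h1 : ∑ j ∈ s.filter (fun j => ¬ gc j ≠ 0), gc j • A j.1 = 0 := by
        apply Finset.sum_eq_zero
        intro j hj
        rw [Finset.mem_filter, not_not] at hj
        rw [hj.2, zero_smul]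
      rw [h1, add_zero]
      apply Finset.sum_congr rfl
      intro j hj
      rw [hcoef j hj, one_smul]
    set F : Finset α := t.image Subtype.val with hF
    have hFI : ↑F ⊆ I := by
      intro b hb
      rw [hF, Finset.coe_image] at hb
      obtain ⟨j, _, rfl⟩ := hb
      exact j.2
    have hFne : F.Nonempty := by
      refine ⟨i.1, ?_⟩
      rw [hF, Finset.mem_image]
      exact ⟨i, by rw [ht, Finset.mem_filter]; exact ⟨hi, hgi⟩, rfl⟩
    refine hns F hFI hFne ?_
    rw [hF, Finset.sum_image (fun p _ q _ h => Subtype.ext h)]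
    exact hsum2

lemma brep_circuit_iff (hE : M.E = S)
    (hI : ∀ I : Set α, M.Indep I ↔ I ⊆ S ∧ LinearIndependent (ZMod 2) (fun e : I => A e.1))
    (C : Set α) :
    MatroidCircuit M C ↔ ∃ F : Finset α, C = ↑F ∧ BCirc S A F := by
  have hdep : ∀ D : Set α, M.Dep D ↔ D ⊆ S ∧ ∃ F : Finset α, ↑F ⊆ D ∧ BCyc S A F := by
    intro D
    rw [Matroid.Dep, brep_indep_iff hE hI, hE]
    constructor
    · rintro ⟨hni, hDS⟩
      refine ⟨hDS, ?_⟩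
      push_neg at hni
      obtain ⟨F, hFD, hFne, hFsum⟩ := hni hDS
      exact ⟨F, hFD, fun a ha => hDS (hFD ha), hFne, hFsum⟩
    · rintro ⟨hDS, F, hFD, _, hFne, hFsum⟩
      refine ⟨?_, hDS⟩
      rintro ⟨-, hall⟩
      exact hall F hFD hFne hFsum
  constructor
  · rintro ⟨hC, hmin⟩
    obtain ⟨hCS, F, hFC, hFcyc⟩ := (hdep C).1 hC
    have hCF : C = ↑F := by
      by_contra hne
      have hss : (↑F : Set α) ⊂ C := lt_of_le_of_ne hFC (fun h => hne h.symm)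
      exact hmin _ hss ((hdep _).2 ⟨hFcyc.1, F, le_refl _, hFcyc⟩)
    refine ⟨F, hCF, hFcyc, fun F' hF'F hF'cyc => ?_⟩
    by_contra hne
    have hss : (↑F' : Set α) ⊂ C := by
      rw [hCF]
      exact Finset.coe_ssubset.2 (lt_of_le_of_ne hF'F hne)
    exact hmin _ hss ((hdep _).2 ⟨hF'cyc.1, F', le_refl _, hF'cyc⟩)
  · rintro ⟨F, rfl, hFcirc, hFmin⟩
    refine ⟨(hdep _).2 ⟨hFcirc.1, F, le_refl _, hFcirc⟩, fun D hD hDdep => ?_⟩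
    obtain ⟨hDS, F', hF'D, hF'cyc⟩ := (hdep D).1 hDdep
    have hF'F : F' ⊆ F := Finset.coe_subset.1 (hF'D.trans hD.le)
    have := hFmin F' hF'F hF'cyc
    subst this
    exact hD.ne (le_antisymm hD.le hF'D)

end Binary
section Binary2

variable {α W : Type*} [AddCommGroup W] [Module (ZMod 2) W]
variable {S : Set α} {A : α → W}

lemma bcyc_exists_circ_sub : ∀ n (F : Finset α), F.card = n → BCyc S A F →
    ∃ G, G ⊆ F ∧ BCirc S A G := by
  intro n
  induction n using Nat.strong_induction_on with
  | _ n ih =>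
    intro F hcard hF
    by_cases hall : ∀ G ⊆ F, BCyc S A G → G = F
    · exact ⟨F, le_refl _, hF, hall⟩
    · push_neg at hall
      obtain ⟨G, hGF, hGcyc, hGne⟩ := hall
      have hlt : G.card < n := hcard ▸ Finset.card_lt_card (lt_of_le_of_ne hGF hGne)
      obtain ⟨G', hG'G, hG'⟩ := ih G.card hlt G rfl hGcyc
      exact ⟨G', hG'G.trans hGF, hG'⟩

lemma bcyc_exists_circ_mem : ∀ n (F : Finset α), F.card = n → BCyc S A F → ∀ e ∈ F,
    ∃ G, G ⊆ F ∧ BCirc S A G ∧ e ∈ G := by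
  intro n
  induction n using Nat.strong_induction_on with
  | _ n ih =>
    intro F hcard hF e he
    obtain ⟨G, hGF, hGcirc⟩ := bcyc_exists_circ_sub F.card F rfl hF
    by_cases heG : e ∈ G
    · exact ⟨G, hGF, hGcirc, heG⟩
    · set F' : Finset α := F \ G with hF'
      have hsum : ∑ a ∈ F', A a = 0 := by
        have h := Finset.sum_sdiff (f := A) hGF
        have h2 := hGcirc.1.2.2
        rw [h2, add_zero] at h
        rw [hF', h, hF.2.2]
      have hcyc : BCyc S A F' := by
        refine ⟨fun a ha => hF.1 (by simpa [hF'] using (Finset.mem_sdiff.1 ha).1), ⟨e, ?_⟩, hsum⟩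
        · exact Finset.mem_sdiff.2 ⟨he, heG⟩
      have hlt : F'.card < n := by
        rw [← hcard]
        apply Finset.card_lt_card
        refine Finset.ssubset_iff_of_subset (Finset.sdiff_subset) |>.2 ?_
        obtain ⟨a, ha⟩ := hGcirc.1.2.1
        exact ⟨a, hGF ha, by simp [hF', ha]⟩
      obtain ⟨G', hG'F', hG', heG'⟩ := ih F'.card hlt F' rfl hcyc e (Finset.mem_sdiff.2 ⟨he, heG⟩)
      exact ⟨G', hG'F'.trans Finset.sdiff_subset, hG', heG'⟩

lemma bcirc_connect : ∀ n (C1 C2 : Finset α) (e f : α), (C1 \ C2).card = n →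
    BCirc S A C1 → BCirc S A C2 → e ∈ C1 → (C1 ∩ C2).Nonempty → f ∈ C2 →
    ∃ C, BCirc S A C ∧ e ∈ C ∧ f ∈ C := by
  intro n
  induction n using Nat.strong_induction_on with
  | _ n ih =>
    intro C1 C2 e f hn h1 h2 he hint hf
    by_cases hf1 : f ∈ C1
    · exact ⟨C1, h1, he, hf1⟩
    by_cases he2 : e ∈ C2
    · exact ⟨C2, h2, he2, hf⟩
    -- main case
    set D : Finset α := (C1 \ C2) ∪ (C2 \ C1) with hD
    have hDsum : ∑ a ∈ D, A a = 0 := by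
      rw [hD, sum_sd, h1.1.2.2, h2.1.2.2, add_zero]
    have heD : e ∈ D := by
      rw [hD, Finset.mem_union]
      exact Or.inl (Finset.mem_sdiff.2 ⟨he, he2⟩)
    have hDcyc : BCyc S A D := by
      refine ⟨?_, ⟨e, heD⟩, hDsum⟩
      intro a ha
      rw [hD, Finset.coe_union, Set.mem_union] at ha
      rcases ha with ha | ha
      · exact h1.1.1 (Finset.mem_coe.2 (Finset.mem_sdiff.1 (Finset.mem_coe.1 ha)).1)
      · exact h2.1.1 (Finset.mem_coe.2 (Finset.mem_sdiff.1 (Finset.mem_coe.1 ha)).1)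
    obtain ⟨C3, hC3D, hC3circ, heC3⟩ := bcyc_exists_circ_mem D.card D rfl hDcyc e heD
    by_cases hfC3 : f ∈ C3
    · exact ⟨C3, hC3circ, heC3, hfC3⟩
    -- C3 meets C2
    have hC3sub : ∀ a ∈ C3, (a ∈ C1 ∧ a ∉ C2) ∨ (a ∈ C2 ∧ a ∉ C1) := by
      intro a ha
      have := hC3D ha
      rw [hD, Finset.mem_union, Finset.mem_sdiff, Finset.mem_sdiff] at this
      exact this
    have hC32 : (C3 ∩ C2).Nonempty := by
      by_contra hcon
      rw [Finset.not_nonempty_iff_eq_empty] at hcon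
      have hsub : C3 ⊆ C1 := by
        intro a ha
        rcases hC3sub a ha with h | h
        · exact h.1
        · exact absurd (Finset.mem_inter.2 ⟨ha, h.1⟩) (by simp [hcon])
      have := h1.2 C3 hsub hC3circ.1
      subst this
      obtain ⟨c, hc⟩ := hint
      rw [Finset.mem_inter] at hc
      rcases hC3sub c hc.1 with h | h
      · exact h.2 hc.2
      · exact h.2 hc.1
    have hC3C2sub : C3 \ C2 ⊆ C1 \ C2 := by
      intro a ha
      rw [Finset.mem_sdiff] at ha ⊢
      rcases hC3sub a ha.1 with h | h
      · exact ⟨h.1, ha.2⟩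
      · exact absurd h.1 ha.2
    by_cases hstrict : C1 \ C2 ⊆ C3 \ C2
    · -- then C1 Δ C3 = C2 and f ∈ C3, contradiction
      exfalso
      set H : Finset α := (C1 \ C3) ∪ (C3 \ C1) with hH
      have hHsum : ∑ a ∈ H, A a = 0 := by
        rw [hH, sum_sd, h1.1.2.2, hC3circ.1.2.2, add_zero]
      have hHsubC2 : H ⊆ C2 := by
        intro a ha
        rw [hH, Finset.mem_union, Finset.mem_sdiff, Finset.mem_sdiff] at ha
        rcases ha with ⟨ha1, ha3⟩ | ⟨ha3, ha1⟩
        · by_contra ha2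
          exact ha3 (Finset.mem_sdiff.1 (hstrict (Finset.mem_sdiff.2 ⟨ha1, ha2⟩))).1
        · rcases hC3sub a ha3 with h | h
          · exact absurd h.1 ha1
          · exact h.1
      have hHne : H.Nonempty := by
        obtain ⟨c, hc⟩ := hint
        rw [Finset.mem_inter] at hc
        have hcC3 : c ∉ C3 := by
          intro hcon
          rcases hC3sub c hcon with h | h
          · exact h.2 hc.2
          · exact h.2 hc.1
        exact ⟨c, by rw [hH, Finset.mem_union, Finset.mem_sdiff]; exact Or.inl ⟨hc.1, hcC3⟩⟩
      have hHcyc : BCyc S A H := ⟨fun a ha => h2.1.1 (hHsubC2 (Finset.mem_coe.1 ha)), hHne, hHsum⟩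
      have hHeq := h2.2 H hHsubC2 hHcyc
      rw [← hHeq, hH, Finset.mem_union, Finset.mem_sdiff, Finset.mem_sdiff] at hf
      rcases hf with h | h
      · exact hf1 h.1
      · exact hfC3 h.1
    · -- strict decrease
      have hss : C3 \ C2 ⊂ C1 \ C2 := lt_of_le_of_ne hC3C2sub (fun h => hstrict (h ▸ le_refl _))
      have hlt : (C3 \ C2).card < n := hn ▸ Finset.card_lt_card hss
      exact ih _ hlt C3 C2 e f rfl hC3circ h2 heC3 hC32 hf

end Binary2
section Binary3

variable {α W : Type*} [AddCommGroup W] [Module (ZMod 2) W]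
variable {M : Matroid α} {S : Set α} {A : α → W}

lemma connRel_refl (M : Matroid α) (e : α) : ConnRel M e e := Or.inl rfl

lemma connRel_symm {M : Matroid α} {e f : α} (h : ConnRel M e f) : ConnRel M f e := by
  rcases h with h | ⟨C, hC, he, hf⟩
  · exact Or.inl h.symm
  · exact Or.inr ⟨C, hC, hf, he⟩

variable (hE : M.E = S)
    (hI : ∀ I : Set α, M.Indep I ↔ I ⊆ S ∧ LinearIndependent (ZMod 2) (fun e : I => A e.1))

include hE hI

lemma brep_connRel_trans {e f h : α} (h1 : ConnRel M e f) (h2 : ConnRel M f h) :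
    ConnRel M e h := by
  rcases h1 with rfl | ⟨C1, hC1, he1, hf1⟩
  · exact h2
  rcases h2 with rfl | ⟨C2, hC2, hf2, hh2⟩
  · exact Or.inr ⟨C1, hC1, he1, hf1⟩
  by_cases heh : e = h
  · exact Or.inl heh
  obtain ⟨F1, rfl, hF1⟩ := (brep_circuit_iff hE hI C1).1 hC1
  obtain ⟨F2, rfl, hF2⟩ := (brep_circuit_iff hE hI C2).1 hC2
  by_cases hh1 : h ∈ F1
  · exact Or.inr ⟨↑F1, hC1, he1, hh1⟩
  by_cases he2 : e ∈ F2
  · exact Or.inr ⟨↑F2, hC2, he2, hh2⟩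
  obtain ⟨C, hCcirc, heC, hhC⟩ := bcirc_connect (F1 \ F2).card F1 F2 e h rfl hF1 hF2
    (Finset.mem_coe.1 he1) ⟨f, Finset.mem_inter.2 ⟨Finset.mem_coe.1 hf1, Finset.mem_coe.1 hf2⟩⟩
    (Finset.mem_coe.1 hh2)
  exact Or.inr ⟨↑C, (brep_circuit_iff hE hI _).2 ⟨C, rfl, hCcirc⟩, heC, hhC⟩

lemma brep_connected_iff :
    MatroidConnected M ↔ M.E.Nonempty ∧ ∀ e ∈ M.E, ∀ f ∈ M.E, ConnRel M e f := by
  constructor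
  · rintro ⟨D, ⟨e₀, he₀, hD⟩, huniq⟩
    refine ⟨⟨e₀, he₀⟩, fun e he f hf => ?_⟩
    have hcompe : MatroidComponent M {a ∈ M.E | ConnRel M e a} := ⟨e, he, rfl⟩
    have hcompf : MatroidComponent M {a ∈ M.E | ConnRel M f a} := ⟨f, hf, rfl⟩
    have h1 := huniq _ hcompe
    have h2 := huniq _ hcompf
    have hee : e ∈ D := by
      rw [← h1]; exact ⟨he, connRel_refl M e⟩
    have hff : f ∈ D := by
      rw [← h2]; exact ⟨hf, connRel_refl M f⟩
    rw [hD] at hee hff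
    exact brep_connRel_trans hE hI (connRel_symm hee.2) hff.2
  · rintro ⟨⟨e₀, he₀⟩, htot⟩
    refine ⟨{a ∈ M.E | ConnRel M e₀ a}, ⟨e₀, he₀, rfl⟩, ?_⟩
    rintro D' ⟨e', he', rfl⟩
    ext a
    simp only [Set.mem_setOf_eq]
    constructor
    · rintro ⟨ha, _⟩
      exact ⟨ha, htot e₀ he₀ a ha⟩
    · rintro ⟨ha, _⟩
      exact ⟨ha, htot e' he' a ha⟩

lemma brep_circuit_subset_class {e₀ : α} {C : Set α} (hC : MatroidCircuit M C)
    (hmeets : ∃ c ∈ C, ConnRel M e₀ c) : ∀ c' ∈ C, ConnRel M e₀ c' := by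
  obtain ⟨c, hc, hrel⟩ := hmeets
  intro c' hc'
  exact brep_connRel_trans hE hI hrel (Or.inr ⟨C, hC, hc, hc'⟩)

lemma brep_cyc_class_sum (e₀ : α) :
    ∀ n (F : Finset α), F.card = n → ↑F ⊆ S → ∑ e ∈ F, A e = 0 →
    ∑ e ∈ F.filter (fun a => ConnRel M e₀ a), A e = 0 := by
  intro n
  induction n using Nat.strong_induction_on with
  | _ n ihn =>
    intro F hcard hFS hFsum
    rcases Finset.eq_empty_or_nonempty F with rfl | ⟨e, he⟩
    · simp
    have hFcyc : BCyc S A F := ⟨hFS, ⟨e, he⟩, hFsum⟩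
    obtain ⟨G, hGF, hGcirc, heG⟩ := bcyc_exists_circ_mem F.card F rfl hFcyc e he
    have hGcircuit : MatroidCircuit M ↑G := (brep_circuit_iff hE hI _).2 ⟨G, rfl, hGcirc⟩
    set F' : Finset α := F \ G with hF'
    have hF'sum : ∑ a ∈ F', A a = 0 := by
      have h := Finset.sum_sdiff (f := A) hGF
      rw [hGcirc.1.2.2, add_zero] at h
      rw [hF', h, hFsum]
    have hlt : F'.card < n := by
      rw [← hcard]
      apply Finset.card_lt_card
      refine Finset.ssubset_iff_of_subset Finset.sdiff_subset |>.2 ?_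
      obtain ⟨a, ha⟩ := hGcirc.1.2.1
      exact ⟨a, hGF ha, by simp [hF', ha]⟩
    have hF'S : ↑F' ⊆ S := fun a ha => hFS (Finset.mem_coe.2
      (Finset.mem_sdiff.1 (Finset.mem_coe.1 ha)).1)
    have ihF' := ihn F'.card hlt F' rfl hF'S hF'sum
    by_cases hmeet : ∃ c ∈ G, ConnRel M e₀ c
    · have hall : ∀ c' ∈ G, ConnRel M e₀ c' := by
        intro c' hc'
        exact brep_circuit_subset_class hE hI hGcircuit
          (by obtain ⟨c, hc, hr⟩ := hmeet; exact ⟨c, Finset.mem_coe.2 hc, hr⟩) c'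
          (Finset.mem_coe.2 hc')
      have hsplit : F.filter (fun a => ConnRel M e₀ a) =
          G ∪ F'.filter (fun a => ConnRel M e₀ a) := by
        ext a
        simp only [Finset.mem_filter, Finset.mem_union, hF', Finset.mem_sdiff]
        constructor
        · rintro ⟨haF, har⟩
          by_cases haG : a ∈ G
          · exact Or.inl haG
          · exact Or.inr ⟨⟨haF, haG⟩, har⟩
        · rintro (haG | ⟨⟨haF, _⟩, har⟩)
          · exact ⟨hGF haG, hall a haG⟩
          · exact ⟨haF, har⟩
      have hdisj : Disjoint G (F'.filter (fun a => ConnRel M e₀ a)) := by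
        rw [Finset.disjoint_left]
        intro a haG hcon
        rw [Finset.mem_filter, hF', Finset.mem_sdiff] at hcon
        exact hcon.1.2 haG
      rw [hsplit, Finset.sum_union hdisj, hGcirc.1.2.2, ihF', add_zero]
    · have hsplit : F.filter (fun a => ConnRel M e₀ a) =
          F'.filter (fun a => ConnRel M e₀ a) := by
        ext a
        simp only [Finset.mem_filter, hF', Finset.mem_sdiff]
        constructor
        · rintro ⟨haF, har⟩
          exact ⟨⟨haF, fun haG => hmeet ⟨a, haG, har⟩⟩, har⟩
        · rintro ⟨⟨haF, _⟩, har⟩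
          exact ⟨haF, har⟩
      rw [hsplit, ihF']

end Binary3
section Gamma

variable {α ρ ι : Type*} [Fintype ι] {A : α → ρ → ZMod 2} {x g : ι → α} {S : Set α}

lemma gammaCols_S (hdisj : Disjoint S (Set.range g)) {e : α} (he : e ∈ S) (o : Option ρ) :
    gammaCols A x g e o = o.elim 0 (A e) := by
  simp only [gammaCols]
  rw [dif_neg (by rintro ⟨i, rfl⟩; exact Set.disjoint_left.1 hdisj he ⟨i, rfl⟩)]

lemma gammaCols_g (hginj : Function.Injective g) (i : ι) (o : Option ρ) :
    gammaCols A x g (g i) o = o.elim 1 (A (x i)) := by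
  simp only [gammaCols]
  have h : ∃ j, g j = g i := ⟨i, rfl⟩
  rw [dif_pos h, show h.choose = i from hginj h.choose_spec]

lemma gamma_proj_sum (hdisj : Disjoint S (Set.range g)) (F : Finset α) (hFS : ↑F ⊆ S) :
    (∑ e ∈ F, gammaCols A x g e = 0) ↔ ∑ e ∈ F, A e = 0 := by
  constructor
  · intro h
    funext r
    have := congrFun h (some r)
    simp only [Finset.sum_apply, Pi.zero_apply] at this ⊢
    rw [← this]
    exact Finset.sum_congr rfl fun e he => by
      rw [gammaCols_S hdisj (hFS he) (some r)]; rfl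
  · intro h
    funext o
    simp only [Finset.sum_apply, Pi.zero_apply]
    cases o with
    | none =>
      exact Finset.sum_eq_zero fun e he => by rw [gammaCols_S hdisj (hFS he) none]; rfl
    | some r =>
      have := congrFun h r
      simp only [Finset.sum_apply, Pi.zero_apply] at this
      rw [← this]
      exact Finset.sum_congr rfl fun e he => by rw [gammaCols_S hdisj (hFS he) (some r)]; rfl

lemma gamma_sum (hginj : Function.Injective g) (hdisj : Disjoint S (Set.range g))
    (F : Finset α) (hF : ↑F ⊆ S ∪ Set.range g)
    (hsum : ∑ e ∈ F, gammaCols A x g e = 0) :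
    (((Finset.univ.filter (fun i => g i ∈ F)).card : ZMod 2) = 0) ∧
    (∑ e ∈ F.filter (· ∈ S), A e +
      ∑ i ∈ Finset.univ.filter (fun i => g i ∈ F), A (x i) = 0) ∧
    (F.filter (fun a => a ∉ S) = (Finset.univ.filter (fun i => g i ∈ F)).image g) := by
  classical
  set J := Finset.univ.filter (fun i => g i ∈ F) with hJ
  have himg : F.filter (fun a => a ∉ S) = J.image g := by
    ext a
    simp only [Finset.mem_filter, Finset.mem_image, hJ, Finset.mem_univ, true_and]
    constructor
    · rintro ⟨haF, haS⟩
      rcases hF haF with h | ⟨i, rfl⟩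
      · exact absurd h haS
      · exact ⟨i, haF, rfl⟩
    · rintro ⟨i, hiF, rfl⟩
      exact ⟨hiF, fun h => Set.disjoint_left.1 hdisj h ⟨i, rfl⟩⟩
  have hsplit : ∀ o : Option ρ, ∑ e ∈ F, gammaCols A x g e o =
      ∑ e ∈ F.filter (· ∈ S), gammaCols A x g e o + ∑ i ∈ J, gammaCols A x g (g i) o := by
    intro o
    rw [← Finset.sum_filter_add_sum_filter_not F (· ∈ S), himg,
      Finset.sum_image (fun a _ b _ h => hginj h)]
  refine ⟨?_, ?_, himg⟩
  · have h0 := congrFun hsum none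
    simp only [Finset.sum_apply, Pi.zero_apply] at h0
    rw [hsplit none] at h0
    have h1 : ∑ e ∈ F.filter (· ∈ S), gammaCols A x g e none = 0 :=
      Finset.sum_eq_zero fun e he => by
        rw [gammaCols_S hdisj (Finset.mem_filter.1 he).2 none]; rfl
    have h2 : ∑ i ∈ J, gammaCols A x g (g i) none = (J.card : ZMod 2) := by
      rw [Finset.sum_congr rfl (fun i _ => gammaCols_g hginj i none)]
      simp [Finset.sum_const]
    rw [h1, h2, zero_add] at h0
    exact h0
  · funext r
    have h0 := congrFun hsum (some r)
    simp only [Finset.sum_apply, Pi.zero_apply] at h0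
    rw [hsplit (some r)] at h0
    simp only [Pi.add_apply, Finset.sum_apply, Pi.zero_apply]
    rw [← h0]
    congr 1
    · exact Finset.sum_congr rfl fun e he => by
        rw [gammaCols_S hdisj (Finset.mem_filter.1 he).2 (some r)]; rfl
    · exact Finset.sum_congr rfl fun i _ => by rw [gammaCols_g hginj i (some r)]; rfl

end Gamma
section QCirc

variable {α ρ ι : Type*} [Fintype ι] {A : α → ρ → ZMod 2} {x g : ι → α} {S : Set α}

lemma gammaQ_circ (hxinj : Function.Injective x) (hginj : Function.Injective g)
    (hxS : Set.range x ⊆ S) (hdisj : Disjoint S (Set.range g))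
    (hXnocyc : ∀ F : Finset α, ↑F ⊆ Set.range x → F.Nonempty → ∑ e ∈ F, A e ≠ 0)
    {i j : ι} (hij : i ≠ j) :
    BCirc (S ∪ Set.range g) (gammaCols A x g) ({x i, x j, g i, g j} : Finset α) := by
  classical
  have hxg : ∀ k l : ι, x k ≠ g l := fun k l h =>
    Set.disjoint_left.1 hdisj (hxS ⟨k, rfl⟩) (h ▸ ⟨l, rfl⟩)
  have hxx : x i ≠ x j := fun h => hij (hxinj h)
  have hgg : g i ≠ g j := fun h => hij (hginj h)
  set Q : Finset α := {x i, x j, g i, g j} with hQ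
  have hQsub : ↑Q ⊆ S ∪ Set.range g := by
    intro a ha
    simp only [hQ, Finset.coe_insert, Set.mem_insert_iff, Finset.coe_singleton,
      Set.mem_singleton_iff] at ha
    rcases ha with rfl | rfl | rfl | rfl
    · exact Or.inl (hxS ⟨i, rfl⟩)
    · exact Or.inl (hxS ⟨j, rfl⟩)
    · exact Or.inr ⟨i, rfl⟩
    · exact Or.inr ⟨j, rfl⟩
  have hQneJ : Q.Nonempty := ⟨x i, by simp [hQ]⟩
  have hm1 : x i ∉ ({x j, g i, g j} : Finset α) := by
    simp only [Finset.mem_insert, Finset.mem_singleton]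
    push_neg
    exact ⟨hxx, hxg i i, hxg i j⟩
  have hm2 : x j ∉ ({g i, g j} : Finset α) := by
    simp only [Finset.mem_insert, Finset.mem_singleton]
    push_neg
    exact ⟨hxg j i, hxg j j⟩
  have hm3 : g i ∉ ({g j} : Finset α) := by simpa using hgg
  have hQsum : ∑ e ∈ Q, gammaCols A x g e = 0 := by
    rw [hQ, Finset.sum_insert hm1, Finset.sum_insert hm2, Finset.sum_insert hm3,
      Finset.sum_singleton]
    funext o
    simp only [Pi.add_apply, Pi.zero_apply]
    rw [gammaCols_S hdisj (hxS ⟨i, rfl⟩) o, gammaCols_S hdisj (hxS ⟨j, rfl⟩) o,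
      gammaCols_g hginj i o, gammaCols_g hginj j o]
    cases o with
    | none =>
      show (0 : ZMod 2) + (0 + (1 + 1)) = 0
      decide
    | some r =>
      show A (x i) r + (A (x j) r + (A (x i) r + A (x j) r)) = 0
      have : ∀ a b : ZMod 2, a + (b + (a + b)) = 0 := by decide
      exact this _ _
  refine ⟨⟨hQsub, hQneJ, hQsum⟩, ?_⟩
  rintro F' hF'Q ⟨hF'sub, hF'ne, hF'sum⟩
  obtain ⟨hpar, hAsum, himg⟩ := gamma_sum hginj hdisj F' hF'sub hF'sum
  set J' := Finset.univ.filter (fun k => g k ∈ F') with hJ'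
  have hJ'sub : J' ⊆ ({i, j} : Finset ι) := by
    intro k hk
    rw [hJ', Finset.mem_filter] at hk
    have hgk := hF'Q hk.2
    simp only [hQ, Finset.mem_insert, Finset.mem_singleton] at hgk ⊢
    rcases hgk with h | h | h | h
    · exact absurd h.symm (hxg i k)
    · exact absurd h.symm (hxg j k)
    · exact Or.inl (hginj h)
    · exact Or.inr (hginj h)
  have hT : ∑ k ∈ J', A (x k) = ∑ a ∈ J'.image x, A a :=
    (Finset.sum_image (fun a _ b _ h => hxinj h)).symm
  set Fs' := F'.filter (· ∈ S) with hFs'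
  have hFs'sub : Fs' ⊆ ({x i, x j} : Finset α) := by
    intro a ha
    rw [hFs', Finset.mem_filter] at ha
    have := hF'Q ha.1
    simp only [hQ, Finset.mem_insert, Finset.mem_singleton] at this ⊢
    rcases this with h | h | h | h
    · exact Or.inl h
    · exact Or.inr h
    · exact absurd (h ▸ ha.2) (fun hs => Set.disjoint_left.1 hdisj hs ⟨i, rfl⟩)
    · exact absurd (h ▸ ha.2) (fun hs => Set.disjoint_left.1 hdisj hs ⟨j, rfl⟩)
  have hD0 : (Fs' \ J'.image x) ∪ (J'.image x \ Fs') = ∅ := by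
    by_contra hne
    rw [← ne_eq, Finset.nonempty_iff_ne_empty.symm] at hne
    refine hXnocyc _ ?_ hne ?_
    · intro a ha
      simp only [Finset.coe_union, Finset.coe_sdiff, Set.mem_union, Set.mem_diff] at ha
      rcases ha with ⟨h, -⟩ | ⟨h, -⟩
      · have := hFs'sub h
        simp only [Finset.mem_insert, Finset.mem_singleton] at this
        rcases this with rfl | rfl
        · exact ⟨i, rfl⟩
        · exact ⟨j, rfl⟩
      · obtain ⟨k, -, rfl⟩ := Finset.mem_image.1 h
        exact ⟨k, rfl⟩
    · rw [sum_sd, ← hT, hAsum]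
  have hfs_eq : Fs' = J'.image x := by
    obtain ⟨h1, h2⟩ := Finset.union_eq_empty.1 hD0
    exact le_antisymm (Finset.sdiff_eq_empty_iff_subset.1 h1)
      (Finset.sdiff_eq_empty_iff_subset.1 h2)
  have hF'eq : F' = Fs' ∪ J'.image g := by
    rw [hFs', ← himg, Finset.filter_union_filter_not_eq]
  have hcard2 : ({i, j} : Finset ι).card = 2 := by
    rw [Finset.card_insert_of_notMem (by simpa using hij), Finset.card_singleton]
  have hcard : J'.card ≤ 2 := hcard2 ▸ Finset.card_le_card hJ'sub
  have hcases : J'.card = 0 ∨ J'.card = 1 ∨ J'.card = 2 := by omega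
  rcases hcases with hc | hc | hc
  · exfalso
    rw [Finset.card_eq_zero] at hc
    rw [hc, Finset.image_empty] at hfs_eq
    rw [hF'eq, hfs_eq, hc, Finset.image_empty, Finset.union_empty] at hF'ne
    exact Finset.not_nonempty_empty hF'ne
  · exfalso
    rw [hc] at hpar
    norm_num at hpar
  · have hJeq : J' = ({i, j} : Finset ι) :=
      Finset.eq_of_subset_of_card_le hJ'sub (by omega)
    rw [hF'eq, hfs_eq, hJeq]
    rw [Finset.image_insert, Finset.image_singleton, Finset.image_insert,
      Finset.image_singleton]
    ext a
    simp only [Finset.mem_union, Finset.mem_insert, Finset.mem_singleton, hQ]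
    tauto

end QCirc
/-- Theorem 2.7: For a disconnected binary matroid `M` (loopless and coloopless) and a
nonempty independent set `X = range x`, the Γ-extension `M^X` is connected iff every
component of `M` contains an element of `X`. -/
theorem stmt_1 {α ρ ι : Type*} [Fintype ι] [Nonempty ι]
    (M MX : Matroid α) (S : Set α) (A : α → ρ → ZMod 2) (x g : ι → α)
    (hxinj : Function.Injective x) (hginj : Function.Injective g)
    (hxS : Set.range x ⊆ S) (hdisj : Disjoint S (Set.range g))
    (hXindep : M.Indep (Set.range x))
    (hM : IsBinaryRep M S A)
    (hMX : IsBinaryRep MX (S ∪ Set.range g) (gammaCols A x g))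
    (hloopless : ∀ e ∈ M.E, M.Indep {e})
    (hcoloopless : ∀ e ∈ M.E, M✶.Indep {e})
    (hMdisconn : ¬ MatroidConnected M) :
    MatroidConnected MX ↔ ∀ D : Set α, MatroidComponent M D → (D ∩ Set.range x).Nonempty := by
  classical
  obtain ⟨hME, hMI⟩ := hM
  obtain ⟨hMXE, hMXI⟩ := hMX
  have hXnocyc : ∀ F : Finset α, ↑F ⊆ Set.range x → F.Nonempty → ∑ e ∈ F, A e ≠ 0 :=
    ((brep_indep_iff hME hMI _).1 hXindep).2
  have i₀ : ι := Classical.arbitrary ι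
  constructor
  · -- MX connected → every component of M meets X
    rintro hconn D ⟨e₀, he₀E, rfl⟩
    have he₀S : e₀ ∈ S := hME ▸ he₀E
    by_contra hno
    rw [Set.not_nonempty_iff_eq_empty] at hno
    have hnoX : ∀ i, ¬ ConnRel M e₀ (x i) := by
      intro i hcon
      have : x i ∈ ({f ∈ M.E | ConnRel M e₀ f} ∩ Set.range x) :=
        ⟨⟨hME ▸ hxS ⟨i, rfl⟩, hcon⟩, ⟨i, rfl⟩⟩
      rw [hno] at this
      exact this
    have htot := ((brep_connected_iff hMXE hMXI).1 hconn).2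
    have hrel : ConnRel MX e₀ (g i₀) :=
      htot e₀ (by rw [hMXE]; exact Or.inl he₀S) (g i₀) (by rw [hMXE]; exact Or.inr ⟨i₀, rfl⟩)
    have hne : e₀ ≠ g i₀ := fun h => Set.disjoint_left.1 hdisj he₀S (h ▸ ⟨i₀, rfl⟩)
    obtain ⟨Cset, hCcirc, heC, hgC⟩ := hrel.resolve_left hne
    obtain ⟨C, rfl, hCb⟩ := (brep_circuit_iff hMXE hMXI _).1 hCcirc
    obtain ⟨hpar, hAsum, himg⟩ := gamma_sum hginj hdisj C hCb.1.1 hCb.1.2.2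
    set J := Finset.univ.filter (fun i => g i ∈ C) with hJ
    set Cs := C.filter (· ∈ S) with hCs
    set T := J.image x with hT
    set Fm := (Cs \ T) ∪ (T \ Cs) with hFm
    have hTsum : ∑ a ∈ T, A a = ∑ k ∈ J, A (x k) :=
      Finset.sum_image (fun a _ b _ h => hxinj h)
    have hFmsum : ∑ a ∈ Fm, A a = 0 := by
      rw [hFm, sum_sd, hTsum]
      exact hAsum
    have hFmS : ↑Fm ⊆ S := by
      intro a ha
      simp only [hFm, Finset.coe_union, Finset.coe_sdiff, Set.mem_union, Set.mem_diff] at ha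
      rcases ha with ⟨h, -⟩ | ⟨h, -⟩
      · exact (Finset.mem_filter.1 h).2
      · obtain ⟨k, -, rfl⟩ := Finset.mem_image.1 h
        exact hxS ⟨k, rfl⟩
    have hclass := brep_cyc_class_sum hME hMI e₀ Fm.card Fm rfl hFmS hFmsum
    have hnotT : ∀ a, ConnRel M e₀ a → a ∉ T := by
      intro a har haT
      obtain ⟨k, -, rfl⟩ := Finset.mem_image.1 haT
      exact hnoX k har
    have hfilter_eq : Fm.filter (fun a => ConnRel M e₀ a) =
        Cs.filter (fun a => ConnRel M e₀ a) := by
      ext a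
      simp only [Finset.mem_filter, hFm, Finset.mem_union, Finset.mem_sdiff]
      constructor
      · rintro ⟨h, har⟩
        rcases h with ⟨h1, -⟩ | ⟨h1, -⟩
        · exact ⟨h1, har⟩
        · exact absurd h1 (hnotT a har)
      · rintro ⟨h1, har⟩
        exact ⟨Or.inl ⟨h1, hnotT a har⟩, har⟩
    rw [hfilter_eq] at hclass
    set Cd := Cs.filter (fun a => ConnRel M e₀ a) with hCd
    have he₀Cd : e₀ ∈ Cd := by
      rw [hCd, Finset.mem_filter, hCs, Finset.mem_filter]
      exact ⟨⟨Finset.mem_coe.1 heC, he₀S⟩, Or.inl rfl⟩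
    have hCdS : ↑Cd ⊆ S := fun a ha =>
      (Finset.mem_filter.1 (Finset.mem_filter.1 (Finset.mem_coe.1 ha)).1).2
    have hCdC : Cd ⊆ C := (Finset.filter_subset _ _).trans (Finset.filter_subset _ _)
    have hCdcyc : BCyc (S ∪ Set.range g) (gammaCols A x g) Cd :=
      ⟨hCdS.trans Set.subset_union_left, ⟨e₀, he₀Cd⟩,
        (gamma_proj_sum hdisj Cd hCdS).2 hclass⟩
    have hCdeq := hCb.2 Cd hCdC hCdcyc
    have hgiC : g i₀ ∈ Cd := hCdeq ▸ Finset.mem_coe.1 hgC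
    exact Set.disjoint_left.1 hdisj (hCdS hgiC) ⟨i₀, rfl⟩
  · -- every component meets X → MX connected
    intro hmeet
    have hnontriv : ∃ i j : ι, i ≠ j := by
      by_contra hcon
      push_neg at hcon
      apply hMdisconn
      have hx₀E : x i₀ ∈ M.E := hME ▸ hxS ⟨i₀, rfl⟩
      refine ⟨{f ∈ M.E | ConnRel M (x i₀) f}, ⟨x i₀, hx₀E, rfl⟩, ?_⟩
      rintro D' ⟨e', he', rfl⟩
      obtain ⟨a, ha⟩ := hmeet _ ⟨e', he', rfl⟩
      obtain ⟨⟨haE, harel⟩, i, rfl⟩ := ha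
      have hii : i = i₀ := hcon i i₀
      subst hii
      ext f
      simp only [Set.mem_setOf_eq]
      constructor
      · rintro ⟨hf, hr⟩
        exact ⟨hf, brep_connRel_trans hME hMI (connRel_symm harel) hr⟩
      · rintro ⟨hf, hr⟩
        exact ⟨hf, brep_connRel_trans hME hMI harel hr⟩
    have hQcirc : ∀ i j : ι, i ≠ j →
        MatroidCircuit MX ↑({x i, x j, g i, g j} : Finset α) := by
      intro i j hij
      exact (brep_circuit_iff hMXE hMXI _).2
        ⟨_, rfl, gammaQ_circ hxinj hginj hxS hdisj hXnocyc hij⟩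
    have hrel_xx : ∀ i j : ι, ConnRel MX (x i) (x j) := by
      intro i j
      by_cases hij : i = j
      · exact Or.inl (by rw [hij])
      · exact Or.inr ⟨_, hQcirc i j hij, by simp, by simp⟩
    have hrel_gx : ∀ i : ι, ConnRel MX (g i) (x i) := by
      intro i
      obtain ⟨k, l, hkl⟩ := hnontriv
      have : ∃ j, j ≠ i := by
        by_cases hik : i = k
        · subst hik
          exact ⟨l, fun h => hkl h.symm⟩
        · exact ⟨k, fun h => hik h.symm⟩
      obtain ⟨j, hji⟩ := this
      exact Or.inr ⟨_, hQcirc i j (fun h => hji h.symm), by simp, by simp⟩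
    have hliftcirc : ∀ C : Set α, MatroidCircuit M C → MatroidCircuit MX C := by
      intro C hC
      obtain ⟨F, rfl, ⟨⟨hFS, hFne, hFsum⟩, hFmin⟩⟩ := (brep_circuit_iff hME hMI C).1 hC
      refine (brep_circuit_iff hMXE hMXI _).2 ⟨F, rfl,
        ⟨⟨hFS.trans Set.subset_union_left, hFne, (gamma_proj_sum hdisj F hFS).2 hFsum⟩, ?_⟩⟩
      rintro F' hF'F ⟨hF'sub, hF'ne, hF'sum⟩
      have hF'S : ↑F' ⊆ S := (Finset.coe_subset.2 hF'F).trans hFS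
      exact hFmin F' hF'F ⟨hF'S, hF'ne, (gamma_proj_sum hdisj F' hF'S).1 hF'sum⟩
    have hlift : ∀ e f : α, ConnRel M e f → ConnRel MX e f := by
      rintro e f (rfl | ⟨C, hC, he, hf⟩)
      · exact Or.inl rfl
      · exact Or.inr ⟨C, hliftcirc C hC, he, hf⟩
    have hreach : ∀ e ∈ S ∪ Set.range g, ∃ i, ConnRel MX e (x i) := by
      rintro e (heS | ⟨i, rfl⟩)
      · have heE : e ∈ M.E := hME ▸ heS
        obtain ⟨a, ha⟩ := hmeet _ ⟨e, heE, rfl⟩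
        obtain ⟨⟨haE, harel⟩, i, rfl⟩ := ha
        exact ⟨i, hlift _ _ harel⟩
      · exact ⟨i, hrel_gx i⟩
    rw [brep_connected_iff hMXE hMXI]
    refine ⟨⟨g i₀, by rw [hMXE]; exact Or.inr ⟨i₀, rfl⟩⟩, ?_⟩
    intro e he f hf
    rw [hMXE] at he hf
    obtain ⟨i, hi⟩ := hreach e he
    obtain ⟨j, hj⟩ := hreach f hf
    exact brep_connRel_trans hMXE hMXI
      (brep_connRel_trans hMXE hMXI hi (hrel_xx i j)) (connRel_symm hj)
end

section
/- Let M be a binary matroid, let X be a nonempty independent set in M, and suppose some component D of M is disjoint from X. Then D is also a component of the Γ-extension matroid M^X; in particular, if M is disconnected and some component of M is disjoint from X, then M^X is disconnected. -/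
open Set
open scoped Classical

section Aux
variable {α W : Type*} [AddCommGroup W] [Module (ZMod 2) W]

lemma aux_add_self (v : W) : v + v = 0 := by
  have h : ((2 : ZMod 2) : ZMod 2) • v = v + v := two_smul (ZMod 2) v
  have h2 : (2 : ZMod 2) = 0 := by decide
  rw [h2, zero_smul] at h
  exact h.symm

lemma aux_sum_symmDiff (P Q : Finset α) (f : α → W) :
    ∑ e ∈ ((P \ Q) ∪ (Q \ P)), f e = ∑ e ∈ P, f e + ∑ e ∈ Q, f e := by
  classical
  have hd : Disjoint (P \ Q) (Q \ P) := by
    refine Finset.disjoint_left.2 ?_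
    intro a ha hb
    exact (Finset.mem_sdiff.1 hb).2 (Finset.mem_sdiff.1 ha).1
  rw [Finset.sum_union hd]
  have h1 : ∑ e ∈ P ∩ Q, f e + ∑ e ∈ P \ Q, f e = ∑ e ∈ P, f e :=
    Finset.sum_inter_add_sum_sdiff P Q f
  have h2 : ∑ e ∈ Q ∩ P, f e + ∑ e ∈ Q \ P, f e = ∑ e ∈ Q, f e :=
    Finset.sum_inter_add_sum_sdiff Q P f
  rw [Finset.inter_comm] at h2
  rw [← h1, ← h2, add_add_add_comm, aux_add_self, zero_add]

lemma aux_not_li_iff (A : α → W) (I : Set α) :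
    ¬ LinearIndependent (ZMod 2) (fun e : I => A e.1) ↔
      ∃ T : Finset α, ↑T ⊆ I ∧ T.Nonempty ∧ ∑ e ∈ T, A e = 0 := by
  classical
  constructor
  · intro h
    rw [linearIndependent_iff'] at h
    push_neg at h
    obtain ⟨s, c, hsum, i, his, hci⟩ := h
    have hc1 : ∀ a : ZMod 2, a ≠ 0 → a = 1 := by decide
    set s1 : Finset ↥I := s.filter (fun j => c j = 1) with hs1
    refine ⟨s1.image Subtype.val, ?_, ?_, ?_⟩
    · intro e he
      obtain ⟨j, _, rfl⟩ := Finset.mem_image.1 he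
      exact j.2
    · exact ⟨i, Finset.mem_image.2 ⟨i, Finset.mem_filter.2 ⟨his, hc1 _ hci⟩, rfl⟩⟩
    · rw [Finset.sum_image (fun a _ b _ h => Subtype.ext h)]
      have : ∑ j ∈ s1, A j.1 = ∑ j ∈ s, c j • A j.1 := by
        rw [Finset.sum_filter]
        refine Finset.sum_congr rfl ?_
        intro j _
        by_cases hj : c j = 1
        · simp [hj]
        · have : c j = 0 := by
            have : ∀ a : ZMod 2, a ≠ 1 → a = 0 := by decide
            exact this _ hj
          simp [hj, this]
      rw [this, hsum]
  · rintro ⟨T, hTI, hTne, hTsum⟩ h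
    rw [linearIndependent_iff'] at h
    set emb : {e // e ∈ T} ↪ ↥I :=
      ⟨fun e => ⟨e.1, hTI e.2⟩, fun a b hab => Subtype.ext (by simpa using congrArg Subtype.val hab)⟩ with hemb
    have hsum : ∑ j ∈ T.attach.map emb, (1 : ZMod 2) • A j.1 = 0 := by
      rw [Finset.sum_map]
      simp only [one_smul, hemb, Function.Embedding.coeFn_mk]
      exact (Finset.sum_attach T (fun e => A e)).trans hTsum
    obtain ⟨a, ha⟩ := hTne
    have := h (T.attach.map emb) (fun _ => 1) hsum ⟨a, hTI ha⟩
      (Finset.mem_map.2 ⟨⟨a, ha⟩, Finset.mem_attach _ _, rfl⟩)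
    exact one_ne_zero this

def BRep {α W : Type*} [AddCommGroup W] [Module (ZMod 2) W]
    (M : Matroid α) (S : Set α) (A : α → W) : Prop :=
  M.E = S ∧ ∀ I : Set α, M.Indep I ↔ I ⊆ S ∧ LinearIndependent (ZMod 2) (fun e : I => A e.1)

variable {M : Matroid α} {S : Set α} {A : α → W}

lemma BRep.dep_of_sum_zero (hrep : BRep M S A) (T : Finset α) (hTS : ↑T ⊆ S)
    (hne : T.Nonempty) (hsum : ∑ e ∈ T, A e = 0) : M.Dep (↑T : Set α) := by
  rw [Matroid.dep_iff]
  refine ⟨?_, by rw [hrep.1]; exact hTS⟩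
  rw [hrep.2]
  rintro ⟨-, hli⟩
  exact (aux_not_li_iff A (↑T : Set α)).2 ⟨T, subset_rfl, hne, hsum⟩ hli

lemma BRep.circuit_finset (hrep : BRep M S A) (C : Set α) (hC : MatroidCircuit M C) :
    ∃ T : Finset α, ↑T = C ∧ T.Nonempty ∧ ∑ e ∈ T, A e = 0 := by
  have hCE : C ⊆ M.E := hC.1.subset_ground
  have hCS : C ⊆ S := hrep.1 ▸ hCE
  have hnli : ¬ LinearIndependent (ZMod 2) (fun e : C => A e.1) := by
    intro hli
    exact hC.1.not_indep ((hrep.2 C).2 ⟨hCS, hli⟩)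
  obtain ⟨T, hTC, hne, hsum⟩ := (aux_not_li_iff A C).1 hnli
  have hdep : M.Dep (↑T : Set α) :=
    hrep.dep_of_sum_zero T (hTC.trans hCS) hne hsum
  have : ¬ (↑T : Set α) ⊂ C := fun h => hC.2 _ h hdep
  have hTeq : (↑T : Set α) = C := by
    rcases eq_or_ssubset_of_subset hTC with h | h
    · exact h
    · exact absurd h this
  exact ⟨T, hTeq, hne, hsum⟩

lemma BRep.exists_circuit_subset (hrep : BRep M S A) :
    ∀ n (T : Finset α), T.card ≤ n → M.Dep (↑T : Set α) →
      ∃ C, MatroidCircuit M C ∧ C ⊆ ↑T := by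
  intro n
  induction n with
  | zero =>
    intro T hcard hdep
    have : T = ∅ := Finset.card_eq_zero.1 (Nat.le_zero.1 hcard)
    subst this
    simp only [Finset.coe_empty] at hdep
    exact absurd M.empty_indep hdep.not_indep
  | succ n ih =>
    intro T hcard hdep
    by_cases hmin : ∀ D ⊂ (↑T : Set α), ¬ M.Dep D
    · exact ⟨↑T, ⟨hdep, hmin⟩, subset_rfl⟩
    · push_neg at hmin
      obtain ⟨E0, hE0ss, hE0dep⟩ := hmin
      have hfin : E0.Finite := T.finite_toSet.subset hE0ss.subset
      have hcoe : ↑hfin.toFinset = E0 := hfin.coe_toFinset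
      have hss : hfin.toFinset ⊂ T := by
        rw [← Finset.coe_ssubset, hcoe]; exact hE0ss
      have hlt : hfin.toFinset.card ≤ n :=
        Nat.lt_succ_iff.1 (lt_of_lt_of_le (Finset.card_lt_card hss) hcard)
      obtain ⟨C, hC, hCsub⟩ := ih hfin.toFinset hlt (by rw [hcoe]; exact hE0dep)
      exact ⟨C, hC, hCsub.trans (by rw [hcoe]; exact hE0ss.subset)⟩

lemma BRep.mem_circuit_of_sum_zero (hrep : BRep M S A) :
    ∀ n (T : Finset α), T.card ≤ n → ↑T ⊆ S → (∑ e ∈ T, A e = 0) →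
      ∀ e ∈ T, ∃ C, MatroidCircuit M C ∧ e ∈ C ∧ C ⊆ ↑T := by
  intro n
  induction n with
  | zero =>
    intro T hcard _ _ e he
    rw [Finset.card_eq_zero.1 (Nat.le_zero.1 hcard)] at he
    exact absurd he (Finset.notMem_empty e)
  | succ n ih =>
    intro T hcard hTS hsum e he
    have hdep : M.Dep (↑T : Set α) := hrep.dep_of_sum_zero T hTS ⟨e, he⟩ hsum
    obtain ⟨C1, hC1, hC1sub⟩ := hrep.exists_circuit_subset _ T le_rfl hdep
    by_cases heC1 : e ∈ C1
    · exact ⟨C1, hC1, heC1, hC1sub⟩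
    · obtain ⟨T1, hT1C1, hT1ne, hT1sum⟩ := hrep.circuit_finset C1 hC1
      have hT1T : T1 ⊆ T := by
        rw [← Finset.coe_subset, hT1C1]; exact hC1sub
      have hsum' : ∑ x ∈ T \ T1, A x = 0 := by
        have := Finset.sum_sdiff (f := A) hT1T
        rw [hT1sum, add_zero] at this
        rw [this, hsum]
      have hcard' : (T \ T1).card ≤ n := by
        have h1 : (T \ T1).card < T.card := by
          apply Finset.card_lt_card
          apply Finset.sdiff_ssubset hT1T
          exact hT1ne
        omega
      have heT' : e ∈ T \ T1 := Finset.mem_sdiff.2 ⟨he, fun h => heC1 (hT1C1 ▸ Finset.mem_coe.2 h)⟩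
      obtain ⟨C, hC, heC, hCsub⟩ := ih (T \ T1) hcard'
        ((Finset.coe_subset.2 (Finset.sdiff_subset)).trans hTS) hsum' e heT'
      exact ⟨C, hC, heC, hCsub.trans (Finset.coe_subset.2 Finset.sdiff_subset)⟩

end Aux

def iotaMap (ρ : Type*) : (ρ → ZMod 2) →ₗ[ZMod 2] (Option ρ → ZMod 2) where
  toFun v := fun o => o.elim 0 v
  map_add' u v := by funext o; cases o <;> simp
  map_smul' c v := by funext o; cases o <;> simp

def piMap (ρ : Type*) : (Option ρ → ZMod 2) →ₗ[ZMod 2] (ρ → ZMod 2) where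
  toFun v := fun r => v (some r)
  map_add' := fun _ _ => rfl
  map_smul' := fun _ _ => rfl

lemma piMap_iotaMap {ρ : Type*} (v : ρ → ZMod 2) : piMap ρ (iotaMap ρ v) = v := rfl

lemma iotaMap_ker (ρ : Type*) : LinearMap.ker (iotaMap ρ) = ⊥ := by
  rw [LinearMap.ker_eq_bot]
  intro u v huv
  funext r
  exact congrFun huv (some r)

section GammaLemmas
variable {α ρ ι : Type*} (A : α → ρ → ZMod 2) (x g : ι → α)

lemma gamma_of_not_mem {e : α} (h : ¬ ∃ i, g i = e) :
    gammaCols A x g e = iotaMap ρ (A e) := by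
  funext o
  simp only [gammaCols, dif_neg h]
  rfl

lemma gamma_of_g (hginj : Function.Injective g) (i : ι) :
    gammaCols A x g (g i) = fun o => o.elim 1 (fun r => A (x i) r) := by
  have h : ∃ j, g j = g i := ⟨i, rfl⟩
  funext o
  simp only [gammaCols, dif_pos h]
  have : h.choose = i := hginj h.choose_spec
  rw [this]

lemma pi_gamma_of_g (hginj : Function.Injective g) (i : ι) :
    piMap ρ (gammaCols A x g (g i)) = A (x i) := by
  rw [gamma_of_g A x g hginj i]; rfl

end GammaLemmas

/-- If a component `D` of the binary matroid `M` (loopless and coloopless) is disjoint from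
the nonempty independent set `X = range x`, then `D` is also a component of the Γ-extension
`M^X`; in particular, if `M` is disconnected and some component of `M` is disjoint from `X`,
then `M^X` is disconnected. -/
theorem stmt_2 {α ρ ι : Type*} [Fintype ι] [Nonempty ι]
    (M MX : Matroid α) (S : Set α) (A : α → ρ → ZMod 2) (x g : ι → α)
    (hxinj : Function.Injective x) (hginj : Function.Injective g)
    (hxS : Set.range x ⊆ S) (hdisj : Disjoint S (Set.range g))
    (hXindep : M.Indep (Set.range x))
    (hM : IsBinaryRep M S A)
    (hMX : IsBinaryRep MX (S ∪ Set.range g) (gammaCols A x g))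
    (hloopless : ∀ e ∈ M.E, M.Indep {e})
    (hcoloopless : ∀ e ∈ M.E, M✶.Indep {e})
    (D : Set α) (hD : MatroidComponent M D) (hDX : Disjoint D (Set.range x)) :
    MatroidComponent MX D ∧ (¬ MatroidConnected M → ¬ MatroidConnected MX) := by
  have hMrep : BRep M S A := hM
  have hXrep : BRep MX (S ∪ Set.range g) (gammaCols A x g) := hMX
  have hSg : ∀ e ∈ S, ¬ ∃ i, g i = e := by
    rintro e he ⟨i, rfl⟩
    exact Set.disjoint_left.1 hdisj he ⟨i, rfl⟩
  have hGiota : ∀ e ∈ S, gammaCols A x g e = iotaMap ρ (A e) := fun e he =>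
    gamma_of_not_mem A x g (hSg e he)
  have hind : ∀ I : Set α, I ⊆ S → (M.Indep I ↔ MX.Indep I) := by
    intro I hIS
    rw [hM.2, hMX.2]
    have hcomp : (fun e : I => gammaCols A x g e.1) = (iotaMap ρ) ∘ (fun e : I => A e.1) :=
      funext fun e => hGiota e.1 (hIS e.2)
    constructor
    · rintro ⟨-, hli⟩
      refine ⟨hIS.trans Set.subset_union_left, ?_⟩
      rw [hcomp]
      exact ((iotaMap ρ).linearIndependent_iff (iotaMap_ker ρ)).2 hli
    · rintro ⟨-, hli⟩
      rw [hcomp] at hli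
      exact ⟨hIS, ((iotaMap ρ).linearIndependent_iff (iotaMap_ker ρ)).1 hli⟩
  have hdepT : ∀ I : Set α, I ⊆ S → (M.Dep I ↔ MX.Dep I) := by
    intro I hIS
    rw [Matroid.dep_iff, Matroid.dep_iff, hind I hIS, hM.1, hMX.1]
    exact and_congr_right fun _ =>
      ⟨fun _ => hIS.trans Set.subset_union_left, fun _ => hIS⟩
  have hcircT : ∀ C : Set α, C ⊆ S → (MatroidCircuit M C ↔ MatroidCircuit MX C) := by
    intro C hCS
    unfold MatroidCircuit
    rw [hdepT C hCS]
    refine and_congr_right fun _ => ?_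
    constructor
    · intro h D' hD' hdep; exact h D' hD' ((hdepT D' (hD'.subset.trans hCS)).2 hdep)
    · intro h D' hD' hdep; exact h D' hD' ((hdepT D' (hD'.subset.trans hCS)).1 hdep)
  obtain ⟨e₀, he₀E, hDeq⟩ := hD
  have he₀S : e₀ ∈ S := hM.1 ▸ he₀E
  have he₀D : e₀ ∈ D := by rw [hDeq]; exact ⟨he₀E, Or.inl rfl⟩
  have hDsubS : D ⊆ S := by
    rw [hDeq]; intro f hf; exact hM.1 ▸ hf.1
  have he₀x : e₀ ∉ Set.range x := fun h => Set.disjoint_left.1 hDX he₀D h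
  have hkey : ∀ C : Set α, MatroidCircuit MX C → e₀ ∈ C → MatroidCircuit M C ∧ C ⊆ D := by
    intro C hC he₀C
    obtain ⟨T, hTC, hTne, hTsum⟩ := hXrep.circuit_finset C hC
    have hTE : (↑T : Set α) ⊆ S ∪ Set.range g := by
      rw [hTC, ← hMX.1]; exact hC.1.subset_ground
    have hpisum : ∑ e ∈ T, piMap ρ (gammaCols A x g e) = 0 := by
      rw [← map_sum, hTsum, map_zero]
    set J : Finset ι := Finset.univ.filter (fun i => g i ∈ T) with hJ
    set Ts : Finset α := T.filter (fun e => e ∈ S) with hTs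
    set Tg : Finset α := T.filter (fun e => e ∉ S) with hTg
    have hTgJ : Tg = J.image g := by
      ext e
      constructor
      · intro he
        obtain ⟨heT, heS⟩ := Finset.mem_filter.1 he
        rcases hTE heT with h | h
        · exact absurd h heS
        · obtain ⟨i, rfl⟩ := h
          exact Finset.mem_image.2 ⟨i, Finset.mem_filter.2 ⟨Finset.mem_univ i, heT⟩, rfl⟩
      · intro he
        obtain ⟨i, hi, rfl⟩ := Finset.mem_image.1 he
        refine Finset.mem_filter.2 ⟨(Finset.mem_filter.1 hi).2, fun hgS => ?_⟩
        exact Set.disjoint_right.1 hdisj ⟨i, rfl⟩ hgS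
    have hdisjTsTg : Disjoint Ts Tg := by
      refine Finset.disjoint_left.2 ?_
      intro a ha hb
      exact (Finset.mem_filter.1 hb).2 (Finset.mem_filter.1 ha).2
    have hsplit : Ts ∪ Tg = T := Finset.filter_union_filter_not_eq _ T
    have hsum2 : ∑ e ∈ Ts, A e + ∑ e ∈ J.image x, A e = 0 := by
      have h1 : ∑ e ∈ Ts, piMap ρ (gammaCols A x g e) +
          ∑ e ∈ Tg, piMap ρ (gammaCols A x g e) = 0 := by
        rw [← Finset.sum_union hdisjTsTg, hsplit]; exact hpisum
      have h2 : ∀ e ∈ Ts, piMap ρ (gammaCols A x g e) = A e := by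
        intro e he
        rw [hGiota e (Finset.mem_filter.1 he).2]
        rfl
      have h3 : ∑ e ∈ Tg, piMap ρ (gammaCols A x g e) = ∑ e ∈ J.image x, A e := by
        rw [hTgJ, Finset.sum_image (fun a _ b _ h => hginj h),
          Finset.sum_image (fun a _ b _ h => hxinj h)]
        exact Finset.sum_congr rfl fun i _ => pi_gamma_of_g A x g hginj i
      rw [Finset.sum_congr rfl h2, h3] at h1
      exact h1
    set T' : Finset α := (Ts \ J.image x) ∪ (J.image x \ Ts) with hT'
    have hT'sum : ∑ e ∈ T', A e = 0 := by
      rw [hT', aux_sum_symmDiff]; exact hsum2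
    have hTsS : ∀ e ∈ Ts, e ∈ S := fun e he => (Finset.mem_filter.1 he).2
    have hT'S : (↑T' : Set α) ⊆ S := by
      intro e he
      rcases Finset.mem_union.1 he with h | h
      · exact hTsS _ (Finset.mem_sdiff.1 h).1
      · obtain ⟨i, -, rfl⟩ := Finset.mem_image.1 (Finset.mem_sdiff.1 h).1
        exact hxS ⟨i, rfl⟩
    have he₀T : e₀ ∈ T := by rw [← Finset.mem_coe, hTC]; exact he₀C
    have he₀T' : e₀ ∈ T' := by
      refine Finset.mem_union_left _ (Finset.mem_sdiff.2 ⟨Finset.mem_filter.2 ⟨he₀T, he₀S⟩, ?_⟩)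
      intro h
      obtain ⟨i, -, hix⟩ := Finset.mem_image.1 h
      exact he₀x ⟨i, hix⟩
    obtain ⟨C0, hC0, he₀C0, hC0T'⟩ :=
      hMrep.mem_circuit_of_sum_zero T'.card T' le_rfl hT'S hT'sum e₀ he₀T'
    have hC0D : C0 ⊆ D := by
      intro f hf
      rw [hDeq]
      have hfE : f ∈ M.E := hC0.1.subset_ground hf
      exact ⟨hfE, Or.inr ⟨C0, hC0, he₀C0, hf⟩⟩
    have hC0C : C0 ⊆ C := by
      intro f hf
      have hfT' : f ∈ T' := hC0T' hf
      have hfx : f ∉ Set.range x := fun h => Set.disjoint_left.1 hDX (hC0D hf) h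
      rcases Finset.mem_union.1 hfT' with h | h
      · rw [← hTC]
        exact Finset.mem_coe.2 (Finset.filter_subset _ T (Finset.mem_sdiff.1 h).1)
      · obtain ⟨i, -, rfl⟩ := Finset.mem_image.1 (Finset.mem_sdiff.1 h).1
        exact absurd ⟨i, rfl⟩ hfx
    have hC0dep : MX.Dep C0 := (hdepT C0 (hC0D.trans hDsubS)).1 hC0.1
    have hC0eq : C0 = C := by
      rcases eq_or_ssubset_of_subset hC0C with h | h
      · exact h
      · exact absurd hC0dep (hC.2 _ h)
    exact ⟨hC0eq ▸ hC0, hC0eq ▸ hC0D⟩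
  have hcomp : MatroidComponent MX D := by
    refine ⟨e₀, by rw [hMX.1]; exact Or.inl he₀S, ?_⟩
    rw [hDeq]
    ext f
    simp only [Set.mem_setOf_eq, Set.mem_sep_iff]
    constructor
    · rintro ⟨hfE, hrel⟩
      refine ⟨by rw [hMX.1]; exact Or.inl (hM.1 ▸ hfE), ?_⟩
      rcases hrel with h | ⟨C, hC, h1, h2⟩
      · exact Or.inl h
      · have hCS : C ⊆ S := hM.1 ▸ hC.1.subset_ground
        exact Or.inr ⟨C, (hcircT C hCS).1 hC, h1, h2⟩
    · rintro ⟨hfE, hrel⟩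
      rcases hrel with h | ⟨C, hC, h1, h2⟩
      · rw [← h]; exact ⟨he₀E, Or.inl rfl⟩
      · obtain ⟨-, hCD⟩ := hkey C hC h1
        have := hCD h2
        rw [hDeq] at this
        exact this
  refine ⟨hcomp, fun _ hconn => ?_⟩
  obtain ⟨Df, hDf, huniq⟩ := hconn
  have hDDf : D = Df := huniq D hcomp
  have i0 : ι := Classical.arbitrary ι
  have hx0E : x i0 ∈ MX.E := by rw [hMX.1]; exact Or.inl (hxS ⟨i0, rfl⟩)
  have hcomp2 : MatroidComponent MX {f ∈ MX.E | ConnRel MX (x i0) f} := ⟨x i0, hx0E, rfl⟩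
  have heq2 : {f ∈ MX.E | ConnRel MX (x i0) f} = Df := huniq _ hcomp2
  have hx0D : x i0 ∈ D := by
    rw [hDDf, ← heq2]
    exact ⟨hx0E, Or.inl rfl⟩
  exact Set.disjoint_left.1 hDX hx0D ⟨i0, rfl⟩
end

section
/- Let M be a k-connected matroid with ground set S such that |S| ≥ 2(k−1). Then for any subset Y ⊆ S with |Y| < k, the deletion M \ Y satisfies r(M \ Y) = r(M), where r denotes the rank function. -/
open Set
open scoped Classical

/-- If `I` is a `Basis'` of `X`, then `matroidERk M X = I.encard`. -/
lemma matroidERk_eq_encard_of_basis' {α : Type*} {M : Matroid α} {I X : Set α}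
    (hI : M.IsBasis' I X) : matroidERk M X = I.encard := by
  apply le_antisymm
  · refine iSup_le fun ⟨J, hJ, hJX⟩ => ?_
    by_contra hlt
    push_neg at hlt
    obtain ⟨e, heJI, hins⟩ := hI.indep.augment hJ hlt
    exact heJI.2 (hI.mem_of_insert_indep (hJX heJI.1) hins)
  · exact le_iSup (fun I : {I : Set α // M.Indep I ∧ I ⊆ X} => (I : Set α).encard)
      ⟨I, hI.indep, hI.subset⟩

lemma matroidERk_mono {α : Type*} (M : Matroid α) {X Z : Set α} (h : X ⊆ Z) :
    matroidERk M X ≤ matroidERk M Z := by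
  refine iSup_le fun ⟨J, hJ, hJX⟩ => ?_
  exact le_iSup (fun I : {I : Set α // M.Indep I ∧ I ⊆ Z} => (I : Set α).encard)
      ⟨J, hJ, hJX.trans h⟩

lemma matroidERk_le_encard {α : Type*} (M : Matroid α) (X : Set α) :
    matroidERk M X ≤ X.encard :=
  iSup_le fun ⟨J, _, hJX⟩ => encard_mono hJX

lemma matroidERank_eq_encard_of_base {α : Type*} {M : Matroid α} {B : Set α}
    (hB : M.IsBase B) : matroidERank M = B.encard :=
  matroidERk_eq_encard_of_basis' hB.isBasis_ground.isBasis'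

/-- If a subset of the ground set is not spanning and `M` has finite rank, then its
rank is strictly less than that of `M`. -/
lemma matroidERk_add_one_le_of_not_spanning {α : Type*} {M : Matroid α} {X : Set α}
    (hXE : X ⊆ M.E) (hX : ¬ M.Spanning X) (hfin : matroidERank M ≠ ⊤) :
    matroidERk M X + 1 ≤ matroidERank M := by
  obtain ⟨I, hI⟩ := M.exists_isBasis' X
  obtain ⟨B, hB, hIB⟩ := hI.indep.exists_isBase_superset
  have hBfin : B.Finite := by
    rw [matroidERank_eq_encard_of_base hB, encard_ne_top_iff] at hfin
    exact hfin
  have hne : I ≠ B := by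
    rintro rfl
    exact hX (hB.spanning.superset hI.subset hXE)
  have hlt : I.encard < B.encard := (hBfin.subset hIB).encard_lt_encard (ssubset_of_ne_of_subset hne hIB)
  rw [matroidERk_eq_encard_of_basis' hI, matroidERank_eq_encard_of_base hB]
  exact ENat.add_one_le_iff (by
    exact fun h => (h ▸ hlt).not_ge le_top) |>.mpr hlt

/-- Corollary 2.5: If `M` is a `k`-connected matroid with ground set `S`, `|S| ≥ 2(k-1)`,
then for every `Y ⊆ S` with `|Y| < k` the deletion `M \ Y` has the same rank as `M`. -/
theorem stmt_3 {α : Type*} (M : Matroid α) (k : ℕ) (hk : 2 ≤ k)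
    (hMconn : KConnected M k) (hcard : ((2 * (k - 1) : ℕ) : ℕ∞) ≤ M.E.encard)
    (Y : Set α) (hY : Y ⊆ M.E) (hYcard : Y.encard < (k : ℕ∞)) :
    matroidERank (matroidDelete M Y) = matroidERank M := by
  set m := k - 1 with hm
  have hm1 : 1 ≤ m := by omega
  have hYm : Y.encard ≤ (m : ℕ∞) := by
    have : Y.encard + 1 ≤ (k : ℕ∞) :=
      (ENat.add_one_le_iff (fun h => (h ▸ hYcard).not_ge le_top)).mpr hYcard
    have hk1 : (k : ℕ∞) = (m : ℕ∞) + 1 := by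
      rw [hm]; norm_cast; omega
    rw [hk1] at this
    exact WithTop.le_of_add_le_add_right ENat.one_ne_top this
  have hmE : (m : ℕ∞) ≤ M.E.encard := by
    refine le_trans ?_ hcard
    norm_cast; omega
  -- `M.E \ Y` is spanning
  have hspan : M.Spanning (M.E \ Y) := by
    by_contra hns
    obtain ⟨A, hYA, hAE, hAcard⟩ := exists_superset_subset_encard_eq hY hYm hmE
    set B := M.E \ A with hB
    refine hMconn A B ⟨disjoint_sdiff_right, union_diff_cancel hAE, ?_, ?_, ?_⟩
    · rw [hAcard]
    · -- B.encard ≥ m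
      have hAB : B.encard + A.encard = M.E.encard := encard_diff_add_encard_of_subset hAE
      by_contra hlt
      push_neg at hlt
      have : B.encard + A.encard < (m : ℕ∞) + (m : ℕ∞) := by
        rw [hAcard]
        exact WithTop.add_lt_add_right (ENat.coe_ne_top m) hlt
      rw [hAB] at this
      refine this.not_ge (le_trans ?_ hcard)
      norm_cast; omega
    · -- rank inequality
      rcases eq_or_ne (matroidERank M) ⊤ with htop | htop
      · rw [htop]; simp
      have hBns : ¬ M.Spanning B := fun hsp =>
        hns (hsp.superset (diff_subset_diff_right hYA) diff_subset)
      have hB1 : matroidERk M B + 1 ≤ matroidERank M :=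
        matroidERk_add_one_le_of_not_spanning diff_subset hBns htop
      have hA : matroidERk M A ≤ (m : ℕ∞) := by
        calc matroidERk M A ≤ A.encard := matroidERk_le_encard M A
        _ = (m : ℕ∞) := hAcard
      have hmm : (m : ℕ∞) = ((m - 1 : ℕ) : ℕ∞) + 1 := by norm_cast; omega
      have hsub : (m : ℕ∞) - 1 = ((m - 1 : ℕ) : ℕ∞) := by
        rw [hmm]; rfl
      rw [hsub]
      calc matroidERk M A + matroidERk M B
          ≤ (m : ℕ∞) + matroidERk M B := add_le_add_left hA _
        _ = ((m - 1 : ℕ) : ℕ∞) + (matroidERk M B + 1) := by rw [hmm, add_assoc, add_comm 1]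
        _ ≤ ((m - 1 : ℕ) : ℕ∞) + matroidERank M := add_le_add_right hB1 _
        _ = matroidERank M + ((m - 1 : ℕ) : ℕ∞) := add_comm _ _
  -- conclude
  obtain ⟨Bs, hBs, hBsub⟩ := hspan.exists_isBase_subset
  have h1 : matroidERank (matroidDelete M Y) = matroidERk M (M.E \ Y) := by
    unfold matroidERank matroidDelete matroidERk
    apply le_antisymm
    · refine iSup_le fun ⟨J, hJ, hJX⟩ => ?_
      rw [Matroid.restrict_indep_iff] at hJ
      exact le_iSup (fun I : {I : Set α // M.Indep I ∧ I ⊆ M.E \ Y} => (I : Set α).encard)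
        ⟨J, hJ.1, hJ.2⟩
    · refine iSup_le fun ⟨J, hJ, hJX⟩ => ?_
      exact le_iSup
        (fun I : {I : Set α // (M.restrict (M.E \ Y)).Indep I ∧ I ⊆ (M.restrict (M.E \ Y)).E} =>
          (I : Set α).encard)
        ⟨J, Matroid.restrict_indep_iff.mpr ⟨hJ, hJX⟩, hJX⟩
  rw [h1, matroidERank_eq_encard_of_base hBs]
  apply le_antisymm
  · exact (matroidERk_mono M diff_subset).trans_eq (matroidERank_eq_encard_of_base hBs)
  · exact le_iSup (fun I : {I : Set α // M.Indep I ∧ I ⊆ M.E \ Y} => (I : Set α).encard)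
      ⟨Bs, hBs.indep, hBsub⟩
end

section
/- Let M be a binary matroid with ground set S, let X be a nonempty independent set in M, and let M^X be the Γ-extension of M with ground set S ∪ Γ. Then the set Γ is independent in M^X. -/
open Set
open scoped Classical

/-- Lemma 2.1(i): The set `Γ = range g` is independent in the Γ-extension `M^X`. -/
theorem stmt_4 {α ρ ι : Type*} [Fintype ι] [Nonempty ι]
    (M MX : Matroid α) (S : Set α) (A : α → ρ → ZMod 2) (x g : ι → α)
    (hxinj : Function.Injective x) (hginj : Function.Injective g)
    (hxS : Set.range x ⊆ S) (hdisj : Disjoint S (Set.range g))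
    (hXindep : M.Indep (Set.range x))
    (hM : IsBinaryRep M S A)
    (hMX : IsBinaryRep MX (S ∪ Set.range g) (gammaCols A x g)) :
    MX.Indep (Set.range g) := by
  obtain ⟨hE, hind⟩ := hMX
  obtain ⟨hE', hind'⟩ := hM
  rw [hind]
  refine ⟨subset_union_right, ?_⟩
  -- independence of the original columns indexed by ι
  have hx : LinearIndependent (ZMod 2) (fun i : ι => A (x i)) := by
    have h2 := ((hind' _).mp hXindep).2
    exact h2.comp (fun i : ι => (⟨x i, mem_range_self i⟩ : Set.range x))
      (fun i j hij => hxinj (congrArg Subtype.val hij))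
  have hcol : ∀ i : ι, gammaCols A x g (g i)
      = fun o : Option ρ => o.elim 1 (A (x i)) := by
    intro i
    funext o
    have h : ∃ j, g j = g i := ⟨i, rfl⟩
    simp only [gammaCols, dif_pos h]
    rw [hginj h.choose_spec]
  have key : LinearIndependent (ZMod 2) (fun i : ι => gammaCols A x g (g i)) := by
    rw [Fintype.linearIndependent_iff]
    intro c hc i
    have hc' : ∀ o : Option ρ, (∑ j, c j • gammaCols A x g (g j)) o = 0 := by
      intro o; rw [hc]; rfl
    have hρ : ∑ j, c j • A (x j) = 0 := by
      funext r
      have := hc' (some r)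
      simpa [hcol, Finset.sum_apply] using this
    exact Fintype.linearIndependent_iff.mp hx c hρ i
  have heq : (fun e : Set.range g => gammaCols A x g e.1) ∘ (Equiv.ofInjective g hginj)
      = fun i : ι => gammaCols A x g (g i) := rfl
  exact (linearIndependent_equiv (Equiv.ofInjective g hginj)).mp (heq ▸ key)
end

section
/- Let M be a binary matroid with ground set S, let X be a nonempty independent set in M, and let M^X be the Γ-extension of M with ground set S ∪ Γ. Let r and r' denote the rank functions of M and M^X respectively. Then for every subset A ⊆ S ∪ Γ with A ∩ Γ ≠ ∅, one has r'(A) ≥ r(S ∩ A) + 1. -/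
open Set
open scoped Classical

/-- Padding a column with a zero entry in the new row, as a linear map. -/
noncomputable def padColZero (ρ : Type*) : (ρ → ZMod 2) →ₗ[ZMod 2] (Option ρ → ZMod 2) where
  toFun v := fun o => o.elim 0 v
  map_add' u v := by funext o; cases o <;> simp
  map_smul' c v := by funext o; cases o <;> simp

/-- Lemma 2.1(iii): For every subset `T` of `S ∪ Γ` meeting `Γ = range g`, the rank of `T`
in the Γ-extension `M^X` is at least `r(S ∩ T) + 1`. -/
theorem stmt_6 {α ρ ι : Type*} [Fintype ι] [Nonempty ι]
    (M MX : Matroid α) (S : Set α) (A : α → ρ → ZMod 2) (x g : ι → α)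
    (hxinj : Function.Injective x) (hginj : Function.Injective g)
    (hxS : Set.range x ⊆ S) (hdisj : Disjoint S (Set.range g))
    (hXindep : M.Indep (Set.range x))
    (hM : IsBinaryRep M S A)
    (hMX : IsBinaryRep MX (S ∪ Set.range g) (gammaCols A x g)) :
    ∀ T : Set α, T ⊆ S ∪ Set.range g → (T ∩ Set.range g).Nonempty →
      matroidERk M (S ∩ T) + 1 ≤ matroidERk MX T := by

  obtain ⟨hME, hMind⟩ := hM
  obtain ⟨hMXE, hMXind⟩ := hMX
  intro T hT hTΓ
  obtain ⟨y, hyT, j, rfl⟩ := hTΓ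
  set f := gammaCols A x g with hfdef
  have hfS : ∀ e ∈ S, f e = padColZero ρ (A e) := by
    intro e he
    have hne : ¬∃ i, g i = e := by
      rintro ⟨i, rfl⟩
      exact Set.disjoint_left.mp hdisj he (mem_range_self i)
    funext o
    cases o <;> simp [hfdef, gammaCols, hne, padColZero]
  have hfg : f (g j) none = 1 := by
    have h : ∃ i, g i = g j := ⟨j, rfl⟩
    simp [hfdef, gammaCols, h]
  have key : ∀ I : Set α, M.Indep I → I ⊆ S ∩ T → MX.Indep (insert (g j) I) := by
    intro I hI hIsub
    have hIS : I ⊆ S := hIsub.trans inter_subset_left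
    have hInd := ((hMind I).mp hI).2
    rw [hMXind]
    constructor
    · rintro e (rfl | he)
      · exact Or.inr (mem_range_self j)
      · exact Or.inl (hIS he)
    · have hker : LinearMap.ker (padColZero ρ) = ⊥ := by
        rw [LinearMap.ker_eq_bot']
        intro v hv
        funext r
        have := congrFun hv (some r)
        simpa [padColZero] using this
      have hI' : LinearIndependent (ZMod 2) (fun e : I => f e.1) := by
        have h2 := hInd.map' (padColZero ρ) hker
        have : (fun e : I => f e.1) = (padColZero ρ) ∘ (fun e : I => A e.1) := by
          funext e
          exact hfS e.1 (hIS e.2)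
        rw [this]
        exact h2
      have hinjI : Set.InjOn f I := Set.injOn_iff_injective.mpr hI'.injective
      have hset : LinearIndependent (ZMod 2) (fun v : f '' I => (v : Option ρ → ZMod 2)) :=
        (linearIndepOn_iff_image hinjI).mp hI'
      have hvalI : ∀ e ∈ I, f e none = 0 := by
        intro e he
        rw [hfS e (hIS he)]
        rfl
      have hnone : ∀ v ∈ Submodule.span (ZMod 2) (f '' I), v none = 0 := by
        intro v hv
        have hle : Submodule.span (ZMod 2) (f '' I) ≤
            LinearMap.ker (LinearMap.proj (R := ZMod 2) (φ := fun _ : Option ρ => ZMod 2) none) := by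
          rw [Submodule.span_le]
          rintro _ ⟨e, he, rfl⟩
          simp [LinearMap.mem_ker, hvalI e he]
        simpa using hle hv
      have hgnot : f (g j) ∉ Submodule.span (ZMod 2) (f '' I) := by
        intro h
        have := hnone _ h
        rw [hfg] at this
        exact one_ne_zero this
      have hins : LinearIndependent (ZMod 2)
          (fun v : ↥(insert (f (g j)) (f '' I)) => (v : Option ρ → ZMod 2)) :=
        LinearIndepOn.id_insert hset hgnot
      have hne10 : ∀ b ∈ I, f (g j) ≠ f b := by
        intro b hb h
        have h10 : (1 : ZMod 2) = 0 := by rw [← hfg, h, hvalI b hb]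
        exact one_ne_zero h10
      have hinj2 : Set.InjOn f (insert (g j) I) := by
        rintro a (rfl | ha) b (rfl | hb) hab
        · rfl
        · exact absurd hab (hne10 b hb)
        · exact absurd hab.symm (hne10 a ha)
        · exact hinjI ha hb hab
      have himg : f '' insert (g j) I = insert (f (g j)) (f '' I) := image_insert_eq
      exact (linearIndepOn_iff_image hinj2).mpr (by rw [himg]; exact hins)
  haveI hne : Nonempty {I : Set α // M.Indep I ∧ I ⊆ S ∩ T} :=
    ⟨⟨∅, M.empty_indep, empty_subset _⟩⟩
  rw [matroidERk, ENat.iSup_add]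
  apply iSup_le
  rintro ⟨I, hI, hIsub⟩
  have hgjI : g j ∉ I := fun h =>
    Set.disjoint_left.mp hdisj (hIsub.trans inter_subset_left h) (mem_range_self j)
  have hind : MX.Indep (insert (g j) I) := key I hI hIsub
  have hsubT : insert (g j) I ⊆ T := insert_subset hyT (hIsub.trans inter_subset_right)
  have hle := le_iSup (fun J : {J : Set α // MX.Indep J ∧ J ⊆ T} => (J : Set α).encard)
    ⟨insert (g j) I, hind, hsubT⟩
  calc I.encard + 1 = (insert (g j) I).encard := (Set.encard_insert_of_notMem hgjI).symm
    _ ≤ matroidERk MX T := hle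
end

section
/- Let M be a binary matroid with ground set S, let X = {x_1, ..., x_m} be a nonempty independent set in M, and let M^X be the Γ-extension of M with Γ = {γ_1, ..., γ_m}. Let J ⊆ Γ be a nonempty set of even cardinality, let X_J = {x_i ∈ X : γ_i ∈ J}, and let D be a circuit of M with X_J ⊆ D. Then J ∪ (D − X_J) is a circuit of M^X. -/
open Set
open scoped Classical

lemma zmod2_one_of_ne_zero (a : ZMod 2) (h : a ≠ 0) : a = 1 := by
  revert h; revert a; decide

lemma zmod2_not_linearIndependent_iff {α V : Type*} [AddCommGroup V] [Module (ZMod 2) V]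
    (v : α → V) (I : Set α) :
    ¬ LinearIndependent (ZMod 2) (fun e : I => v e.1) ↔
      ∃ Z : Finset α, ↑Z ⊆ I ∧ Z.Nonempty ∧ ∑ e ∈ Z, v e = 0 := by
  have h0 : (fun e : I => v e.1) = v ∘ Subtype.val := rfl
  rw [h0, linearIndependent_comp_subtype_iff, linearIndepOn_iff]
  push_neg
  constructor
  · rintro ⟨l, hl, hl0, hlne⟩
    refine ⟨l.support, (Finsupp.mem_supported _ _).1 hl, Finsupp.support_nonempty_iff.2 hlne, ?_⟩
    rw [Finsupp.linearCombination_apply, Finsupp.sum] at hl0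
    rw [← hl0]
    refine Finset.sum_congr rfl fun e he => ?_
    rw [zmod2_one_of_ne_zero _ (Finsupp.mem_support_iff.1 he), one_smul]
  · rintro ⟨Z, hZI, hZne, hZ0⟩
    refine ⟨Finsupp.indicator Z (fun _ _ => 1), ?_, ?_, ?_⟩
    · rw [Finsupp.mem_supported]
      exact (Finset.coe_subset.2 (Finsupp.support_indicator_subset _ _)).trans hZI
    · have hsupp : (Finsupp.indicator Z (fun _ _ => (1 : ZMod 2))).support = Z := by
        ext e
        simp [Finsupp.mem_support_iff, Finsupp.indicator_apply]
      rw [Finsupp.linearCombination_apply, Finsupp.sum, hsupp, ← hZ0]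
      refine Finset.sum_congr rfl fun e he => ?_
      rw [Finsupp.indicator_apply, dif_pos he, one_smul]
    · intro h
      obtain ⟨e, he⟩ := hZne
      have := Finsupp.indicator_apply Z (fun _ _ => (1 : ZMod 2)) e
      rw [h, dif_pos he] at this
      simp at this


/-- Lemma 2.2(iii): If `J = g '' T ⊆ Γ` is nonempty of even cardinality, `X_J = x '' T`, and
`D` is a circuit of `M` containing `X_J`, then `J ∪ (D - X_J)` is a circuit of `M^X`. -/
theorem stmt_10 {α ρ ι : Type*} [Fintype ι] [Nonempty ι]
    (M MX : Matroid α) (S : Set α) (A : α → ρ → ZMod 2) (x g : ι → α)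
    (hxinj : Function.Injective x) (hginj : Function.Injective g)
    (hxS : Set.range x ⊆ S) (hdisj : Disjoint S (Set.range g))
    (hXindep : M.Indep (Set.range x))
    (hM : IsBinaryRep M S A)
    (hMX : IsBinaryRep MX (S ∪ Set.range g) (gammaCols A x g))
    (T : Finset ι) (hT : T.Nonempty) (hTeven : Even T.card)
    (D : Set α) (hD : MatroidCircuit M D) (hXJ : x '' (T : Set ι) ⊆ D) :
    MatroidCircuit MX (g '' (T : Set ι) ∪ (D \ x '' (T : Set ι))) := by
  obtain ⟨hME, hMind⟩ := hM
  obtain ⟨hMXE, hMXind⟩ := hMX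
  -- column facts
  have hg : ∀ i : ι, gammaCols A x g (g i) = fun o => o.elim 1 (A (x i)) := by
    intro i
    have h : ∃ j, g j = g i := ⟨i, rfl⟩
    have hc : h.choose = i := hginj h.choose_spec
    funext o
    rw [gammaCols, dif_pos h, hc]
  have hs : ∀ e ∈ S, gammaCols A x g e = fun o => o.elim 0 (A e) := by
    intro e he
    have h : ¬ ∃ i, g i = e := by
      rintro ⟨i, rfl⟩
      exact hdisj.ne_of_mem he (mem_range_self i) rfl
    funext o
    rw [gammaCols, dif_neg h]
  have hDS : D ⊆ S := hME ▸ hD.1.subset_ground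
  -- key: any nonempty zero-sum subset of D is all of D
  have key : ∀ Z : Finset α, ↑Z ⊆ D → Z.Nonempty → ∑ e ∈ Z, A e = 0 → ↑Z = D := by
    intro Z hZD hZne hZ0
    by_contra hne
    have hdep : M.Dep (↑Z : Set α) := by
      rw [Matroid.dep_iff, hME]
      refine ⟨?_, hZD.trans hDS⟩
      intro hind
      have := (hMind ↑Z).1 hind
      exact (zmod2_not_linearIndependent_iff A ↑Z).2 ⟨Z, subset_rfl, hZne, hZ0⟩ this.2
    exact hD.2 ↑Z (ssubset_of_subset_of_ne hZD hne) hdep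
  -- D is the coe of a finset with zero column sum
  have hDdep : ¬ LinearIndependent (ZMod 2) (fun e : D => A e.1) := by
    intro hind
    exact hD.1.not_indep ((hMind D).2 ⟨hDS, hind⟩)
  obtain ⟨ZD, hZDD, hZDne, hZDsum⟩ := (zmod2_not_linearIndependent_iff A D).1 hDdep
  have hZDeq : (↑ZD : Set α) = D := key ZD hZDD hZDne hZDsum
  -- finsets
  set gT : Finset α := T.image g with hgT
  set xT : Finset α := T.image x with hxT
  set Zd0 : Finset α := ZD \ xT with hZd0
  have hxTZD : xT ⊆ ZD := by
    intro e he
    obtain ⟨i, hi, rfl⟩ := Finset.mem_image.1 he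
    have : x i ∈ D := hXJ ⟨i, hi, rfl⟩
    rwa [← hZDeq] at this
  have hCeq : g '' (T : Set ι) ∪ (D \ x '' (T : Set ι)) = ↑(gT ∪ Zd0) := by
    rw [Finset.coe_union, Finset.coe_sdiff, Finset.coe_image, Finset.coe_image, hZDeq]
  have hdisjTZ : Disjoint gT Zd0 := by
    rw [Finset.disjoint_left]
    intro e he1 he2
    have h1 : e ∈ Set.range g := by
      obtain ⟨i, _, rfl⟩ := Finset.mem_image.1 he1
      exact mem_range_self i
    have h2 : e ∈ S := hDS (hZDeq ▸ (Finset.mem_sdiff.1 he2).1)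
    exact hdisj.ne_of_mem h2 h1 rfl
  have hZd0S : ∀ e ∈ Zd0, e ∈ S := fun e he => hDS (hZDeq ▸ (Finset.mem_sdiff.1 he).1)
  -- the total sum of gammaCols over gT ∪ Zd0 is zero
  have hsum0 : ∑ e ∈ gT ∪ Zd0, gammaCols A x g e = 0 := by
    funext o
    rw [Finset.sum_apply, Finset.sum_union hdisjTZ]
    have h1 : ∑ e ∈ gT, gammaCols A x g e o = ∑ i ∈ T, (Option.elim o 1 (A (x i))) := by
      rw [hgT, Finset.sum_image (fun a _ b _ h => hginj h)]
      exact Finset.sum_congr rfl fun i _ => by rw [hg i]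
    have h2 : ∑ e ∈ Zd0, gammaCols A x g e o =
        ∑ e ∈ Zd0, (Option.elim o 0 (A e)) :=
      Finset.sum_congr rfl fun e he => by rw [hs e (hZd0S e he)]
    rw [h1, h2]
    cases o with
    | none =>
      simp only [Option.elim]
      rw [Finset.sum_const, Finset.sum_const, smul_zero, add_zero]
      obtain ⟨k, hk⟩ := hTeven
      rw [hk]
      show ((k + k) : ℕ) • (1 : ZMod 2) = (0 : Option ρ → ZMod 2) none
      rw [nsmul_eq_mul, mul_one]
      push_cast
      rw [CharTwo.add_self_eq_zero]
      rfl
    | some r =>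
      simp only [Option.elim]
      have h3 : ∑ e ∈ xT, A e r = ∑ i ∈ T, A (x i) r :=
        Finset.sum_image (fun a _ b _ h => hxinj h)
      have h4 : ∑ e ∈ Zd0, A e r + ∑ e ∈ xT, A e r = ∑ e ∈ ZD, A e r :=
        Finset.sum_sdiff hxTZD
      have h5 : ∑ e ∈ ZD, A e r = 0 := by
        have := congrFun hZDsum r
        rwa [Finset.sum_apply] at this
      show (∑ i ∈ T, A (x i) r) + ∑ e ∈ Zd0, A e r = (0 : Option ρ → ZMod 2) (some r)
      rw [← h3, add_comm, h4, h5]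
      rfl
  constructor
  · -- dependence
    rw [Matroid.dep_iff, hMXE, hCeq]
    constructor
    · intro hind
      have hli := ((hMXind _).1 hind).2
      refine (zmod2_not_linearIndependent_iff (gammaCols A x g) _).2
        ⟨gT ∪ Zd0, subset_rfl, ?_, hsum0⟩ hli
      obtain ⟨i, hi⟩ := hT
      exact ⟨g i, Finset.mem_union_left _ (Finset.mem_image_of_mem g hi)⟩
    · intro e he
      rcases Finset.mem_union.1 (Finset.mem_coe.1 he) with h | h
      · obtain ⟨i, _, rfl⟩ := Finset.mem_image.1 h
        exact Or.inr (mem_range_self i)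
      · exact Or.inl (hZd0S e h)
  · -- minimality
    intro C' hss hdep
    rw [hCeq] at hss
    have hC'E := hdep.subset_ground
    have hli : ¬ LinearIndependent (ZMod 2) (fun e : C' => gammaCols A x g e.1) := by
      intro hind
      exact hdep.not_indep ((hMXind C').2 ⟨hMXE ▸ hC'E, hind⟩)
    obtain ⟨Z, hZC', hZne, hZsum⟩ :=
      (zmod2_not_linearIndependent_iff (gammaCols A x g) C').1 hli
    have hZC : ↑Z ⊆ (↑(gT ∪ Zd0) : Set α) := hZC'.trans hss.subset
    set Tg : Finset ι := T.filter (fun i => g i ∈ Z) with hTg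
    set Zd : Finset α := Z \ gT with hZdd
    -- Z = Tg.image g ∪ Zd
    have hZsplit : Z = Tg.image g ∪ Zd := by
      ext e
      simp only [hZdd, hTg, Finset.mem_union, Finset.mem_image, Finset.mem_sdiff,
        Finset.mem_filter]
      constructor
      · intro he
        by_cases hegT : e ∈ gT
        · obtain ⟨i, hi, rfl⟩ := Finset.mem_image.1 hegT
          exact Or.inl ⟨i, ⟨hi, he⟩, rfl⟩
        · exact Or.inr ⟨he, hegT⟩
      · rintro (⟨i, ⟨_, hi⟩, rfl⟩ | ⟨he, _⟩) <;> assumption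
    have hdisjZ : Disjoint (Tg.image g) Zd := by
      rw [Finset.disjoint_left]
      intro e he1 he2
      rw [hZdd] at he2
      exact (Finset.mem_sdiff.1 he2).2
        (Finset.image_subset_image (Finset.filter_subset _ _) he1)
    have hZdZd0 : Zd ⊆ Zd0 := by
      intro e he
      rcases Finset.mem_union.1 (Finset.mem_coe.1 (hZC (Finset.mem_coe.2
        (Finset.mem_sdiff.1 he).1))) with h | h
      · exact absurd h (Finset.mem_sdiff.1 he).2
      · exact h
    -- W
    set W : Finset α := Tg.image x ∪ Zd with hW
    have hTgxZD : Tg.image x ⊆ xT := Finset.image_subset_image (Finset.filter_subset _ _)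
    have hWZD : W ⊆ ZD := Finset.union_subset (hTgxZD.trans hxTZD)
      (hZdZd0.trans (Finset.sdiff_subset))
    have hdisjW : Disjoint (Tg.image x) Zd := by
      rw [Finset.disjoint_left]
      intro e he1 he2
      exact (Finset.mem_sdiff.1 (hZdZd0 he2)).2 (hTgxZD he1)
    have hWsum : ∑ e ∈ W, A e = 0 := by
      funext r
      rw [Finset.sum_apply, hW, Finset.sum_union hdisjW]
      have h1 : ∑ e ∈ Tg.image x, A e r = ∑ i ∈ Tg, A (x i) r :=
        Finset.sum_image (fun a _ b _ h => hxinj h)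
      have h2 : ∑ i ∈ Tg, A (x i) r = ∑ e ∈ Tg.image g, gammaCols A x g e (some r) := by
        rw [Finset.sum_image (fun a _ b _ h => hginj h)]
        exact Finset.sum_congr rfl fun i _ => by rw [hg i]; rfl
      have h3 : ∑ e ∈ Zd, A e r = ∑ e ∈ Zd, gammaCols A x g e (some r) := by
        refine Finset.sum_congr rfl fun e he => ?_
        rw [hs e (hZd0S e (hZdZd0 he))]
        rfl
      have h4 := congrFun hZsum (some r)
      rw [Finset.sum_apply, hZsplit, Finset.sum_union hdisjZ] at h4
      rw [h1, h2, h3, h4]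
      rfl
    have hWne : W.Nonempty := by
      obtain ⟨e, he⟩ := hZne
      by_cases hegT : e ∈ gT
      · obtain ⟨i, hi, rfl⟩ := Finset.mem_image.1 hegT
        exact ⟨x i, Finset.mem_union_left _ (Finset.mem_image_of_mem x
          (Finset.mem_filter.2 ⟨hi, he⟩))⟩
      · exact ⟨e, Finset.mem_union_right _ (by rw [hZdd]; exact Finset.mem_sdiff.2 ⟨he, hegT⟩)⟩
    have hWD : (↑W : Set α) = D := key W (by rw [← hZDeq]; exact_mod_cast hWZD) hWne hWsum
    have hWZDeq : W = ZD := Finset.coe_injective (hWD.trans hZDeq.symm)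
    -- derive C ⊆ ↑Z
    have hCZ : ↑(gT ∪ Zd0) ⊆ (↑Z : Set α) := by
      intro e he
      rcases Finset.mem_union.1 (Finset.mem_coe.1 he) with h | h
      · -- e = g i, i ∈ T; show g i ∈ Z i.e. i ∈ Tg
        obtain ⟨i, hi, rfl⟩ := Finset.mem_image.1 h
        have hxi : x i ∈ W := hWZDeq ▸ hxTZD (Finset.mem_image_of_mem x hi)
        rcases Finset.mem_union.1 hxi with h' | h'
        · obtain ⟨j, hj, hji⟩ := Finset.mem_image.1 h'
          obtain rfl : j = i := hxinj hji
          exact Finset.mem_coe.2 (Finset.mem_filter.1 hj).2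
        · exact absurd (Finset.mem_image_of_mem x hi)
            (Finset.mem_sdiff.1 (hZdZd0 h')).2
      · -- e ∈ ZD \ xT
        have heW : e ∈ W := hWZDeq ▸ (Finset.mem_sdiff.1 h).1
        rcases Finset.mem_union.1 heW with h' | h'
        · exact absurd (hTgxZD h') (Finset.mem_sdiff.1 h).2
        · exact Finset.mem_coe.2 (Finset.mem_sdiff.1 h').1
    rw [← hCeq] at hCZ hss
    exact absurd (hCZ.trans hZC') (fun hh => hss.not_subset hh)
end

section
/- Let k ≥ 5 be an integer, let M be a k-connected binary matroid with at least 2(k−1) elements, and let X be an independent set in M with |X| ≥ 2. Then the Γ-extension matroid M^X is not k-connected. -/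
open Set
open scoped Classical

/-- For `k ≥ 5`, a `k`-connected binary matroid `M` with at least `2(k-1)` elements, and an
independent set `X = range x` with `|X| ≥ 2`, the Γ-extension `M^X` is not `k`-connected. -/
theorem stmt_15 {α ρ ι : Type*} [Fintype ι] [Nonempty ι]
    (M MX : Matroid α) (S : Set α) (A : α → ρ → ZMod 2) (x g : ι → α)
    (hxinj : Function.Injective x) (hginj : Function.Injective g)
    (hxS : Set.range x ⊆ S) (hdisj : Disjoint S (Set.range g))
    (hXindep : M.Indep (Set.range x))
    (hM : IsBinaryRep M S A)
    (hMX : IsBinaryRep MX (S ∪ Set.range g) (gammaCols A x g))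
    (hX2 : 2 ≤ Fintype.card ι)
    (k : ℕ) (hk : 5 ≤ k) (hMconn : KConnected M k)
    (hcard : ((2 * (k - 1) : ℕ) : ℕ∞) ≤ S.encard) :
    ¬ KConnected MX k := by
  intro hcon
  -- pick two distinct indices
  obtain ⟨i, j, hij⟩ := Fintype.exists_pair_of_one_lt_card (by omega : 1 < Fintype.card ι)
  set v := gammaCols A x g with hv
  -- column values
  have hvS : ∀ e ∈ S, v e = fun o => o.elim 0 (fun r => A e r) := by
    intro e he
    have hne : ¬ ∃ i, g i = e := by
      rintro ⟨i, rfl⟩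
      exact Set.disjoint_left.mp hdisj he ⟨i, rfl⟩
    funext o
    simp [hv, gammaCols, hne]
  have hvg : ∀ i, v (g i) = fun o => o.elim 1 (fun r => A (x i) r) := by
    intro i
    have hex : ∃ j, g j = g i := ⟨i, rfl⟩
    have hch : hex.choose = i := hginj hex.choose_spec
    funext o
    simp [hv, gammaCols, dif_pos hex, hch]
  have hxiS : x i ∈ S := hxS ⟨i, rfl⟩
  have hxjS : x j ∈ S := hxS ⟨j, rfl⟩
  -- the four columns sum to zero
  have key : v (x i) + v (x j) + v (g i) + v (g j) = 0 := by
    funext o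
    have h2 : ∀ t s : ZMod 2, t + s + t + s = 0 := by decide
    cases o with
    | none =>
      simp only [Pi.add_apply, Pi.zero_apply, hvS _ hxiS, hvS _ hxjS, hvg, Option.elim]
      decide
    | some r =>
      simp only [Pi.add_apply, Pi.zero_apply, hvS _ hxiS, hvS _ hxjS, hvg, Option.elim]
      exact h2 _ _
  -- distinctness
  have hxgi : x i ∉ Set.range g := fun h => Set.disjoint_left.mp hdisj hxiS h
  have hxgj : x j ∉ Set.range g := fun h => Set.disjoint_left.mp hdisj hxjS h
  have hab : x i ≠ x j := fun h => hij (hxinj h)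
  have hcd : g i ≠ g j := fun h => hij (hginj h)
  have hac : x i ≠ g i := fun h => hxgi ⟨i, h.symm⟩
  have had : x i ≠ g j := fun h => hxgi ⟨j, h.symm⟩
  have hbc : x j ≠ g i := fun h => hxgj ⟨i, h.symm⟩
  have hbd : x j ≠ g j := fun h => hxgj ⟨j, h.symm⟩
  -- the dependent 4-set
  set D : Set α := {x i, x j, g i, g j} with hD
  have hnotindep : ¬ MX.Indep D := by
    intro h
    have hli := ((hMX.2 D).1 h).2
    let w : Fin 4 → D := ![⟨x i, by simp [hD]⟩, ⟨x j, by simp [hD]⟩,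
      ⟨g i, by simp [hD]⟩, ⟨g j, by simp [hD]⟩]
    have hwinj : Function.Injective w := by
      intro p q hpq
      fin_cases p <;> fin_cases q <;>
        simp_all [w, Subtype.ext_iff] <;>
        first
        | rfl
        | exact absurd hpq hab | exact absurd hpq hcd | exact absurd hpq hac
        | exact absurd hpq had | exact absurd hpq hbc | exact absurd hpq hbd
        | exact absurd hpq.symm hab | exact absurd hpq.symm hcd | exact absurd hpq.symm hac
        | exact absurd hpq.symm had | exact absurd hpq.symm hbc | exact absurd hpq.symm hbd
    have hli2 := hli.comp w hwinj
    have hnli : ¬ LinearIndependent (ZMod 2) ((fun e : ↑D => v ↑e) ∘ w) :=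
      Fintype.not_linearIndependent_iff.mpr ⟨fun _ => 1, by
        simpa [Fin.sum_univ_four, w, Function.comp] using key, ⟨0, one_ne_zero⟩⟩
    exact hnli hli2
  -- D is inside the ground set
  have hDE : D ⊆ S ∪ Set.range g := by
    rintro e he
    simp only [hD, Set.mem_insert_iff, Set.mem_singleton_iff] at he
    rcases he with rfl | rfl | rfl | rfl
    · exact Or.inl hxiS
    · exact Or.inl hxjS
    · exact Or.inr ⟨i, rfl⟩
    · exact Or.inr ⟨j, rfl⟩
  have hD4 : D.encard ≤ 4 := by
    calc D.encard ≤ ({x j, g i, g j} : Set α).encard + 1 := Set.encard_insert_le _ _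
      _ ≤ (({g i, g j} : Set α).encard + 1) + 1 := by gcongr; exact Set.encard_insert_le _ _
      _ ≤ ((({g j} : Set α).encard + 1) + 1) + 1 :=
          add_le_add_left (add_le_add_left (Set.encard_insert_le _ _) 1) 1
      _ = 4 := by rw [Set.encard_singleton]; rfl
  have h4k : (4 : ℕ∞) ≤ ((k - 1 : ℕ) : ℕ∞) := by
    rw [show (4 : ℕ∞) = ((4 : ℕ) : ℕ∞) by rfl, Nat.cast_le]
    omega
  have hSE : S ⊆ S ∪ Set.range g := Set.subset_union_left
  have hkE : ((k - 1 : ℕ) : ℕ∞) ≤ (S ∪ Set.range g).encard := by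
    refine le_trans ?_ (le_trans hcard (Set.encard_le_encard hSE))
    rw [Nat.cast_le]; omega
  obtain ⟨Aset, hDA, hAE, hAcard⟩ :=
    Set.exists_superset_subset_encard_eq hDE (hD4.trans h4k) hkE
  have hAE' : Aset ⊆ MX.E := by rw [hMX.1]; exact hAE
  set B : Set α := MX.E \ Aset with hB
  refine hcon Aset B ⟨Set.disjoint_sdiff_right, Set.union_diff_cancel hAE', hAcard.ge, ?_, ?_⟩
  · -- k-1 ≤ |B|
    have hsum := Set.encard_diff_add_encard_of_subset hAE'
    have hEcard : ((k - 1 : ℕ) : ℕ∞) + ((k - 1 : ℕ) : ℕ∞) ≤ MX.E.encard := by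
      rw [hMX.1]
      refine le_trans ?_ (le_trans hcard (Set.encard_le_encard hSE))
      rw [← Nat.cast_add, Nat.cast_le]; omega
    rw [← hsum, hAcard] at hEcard
    exact (WithTop.add_le_add_iff_right (by simp : ((k - 1 : ℕ) : ℕ∞) ≠ ⊤)).mp hEcard
  · -- rank inequality
    have hAfin : Aset.Finite := Set.finite_of_encard_eq_coe hAcard
    have hrA : matroidERk MX Aset ≤ ((k - 2 : ℕ) : ℕ∞) := by
      refine iSup_le ?_
      rintro ⟨I, hI, hIA⟩
      have hne : I ≠ Aset := by
        rintro rfl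
        exact hnotindep (hI.subset hDA)
      have hlt := (hAfin.subset hIA).encard_lt_encard (hIA.ssubset_of_ne hne)
      rw [hAcard] at hlt
      have h1 : I.encard + 1 ≤ ((k - 1 : ℕ) : ℕ∞) := Order.add_one_le_of_lt hlt
      have hn12 : (k - 1 : ℕ) = (k - 2) + 1 := by omega
      have hcast : ((k - 1 : ℕ) : ℕ∞) = ((k - 2 : ℕ) : ℕ∞) + 1 := by
        rw [hn12]; push_cast; ring
      rw [hcast] at h1
      exact (WithTop.add_le_add_iff_right (by simp : (1 : ℕ∞) ≠ ⊤)).mp h1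
    have hrB : matroidERk MX B ≤ matroidERank MX := by
      refine iSup_le ?_
      rintro ⟨I, hI, hIB⟩
      exact le_iSup_of_le ⟨I, hI, hI.subset_ground⟩ le_rfl
    have hk2 : ((k - 1 : ℕ) : ℕ∞) - 1 = ((k - 2 : ℕ) : ℕ∞) := by
      have h := ENat.coe_sub (k - 1) 1
      rw [Nat.cast_one] at h
      rw [← h, Nat.cast_inj]
      omega
    calc matroidERk MX Aset + matroidERk MX B ≤ ((k - 2 : ℕ) : ℕ∞) + matroidERank MX :=
          add_le_add hrA hrB
      _ = matroidERank MX + (((k - 1 : ℕ) : ℕ∞) - 1) := by rw [hk2, add_comm]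
end

section
/- Let M be a 4-connected binary matroid with at least 6 elements and ground set S, let X be a nonempty independent set in M, and let M^X be the Γ-extension of M with ground set S ∪ Γ. Then M^X has no circuit C with |C| ≤ 3 such that C contains exactly one element of S; in particular, no set of the form {x, γ_i, γ_j} with x ∈ S and γ_i, γ_j ∈ Γ is a circuit of M^X. -/
open Set
open scoped Classical

/- ------------------- auxiliary lemmas ------------------- -/

lemma aux_circuit_sum {α ρ : Type*} {N : Matroid α} {S : Set α} {v : α → ρ → ZMod 2}
    (h : IsBinaryRep N S v) {C : Set α} (hC : MatroidCircuit N C) (hfin : C.Finite) :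
    ∑ a ∈ hfin.toFinset, v a = 0 := by
  have hCS : C ⊆ S := h.1 ▸ hC.1.2
  have hnli : ¬ LinearIndependent (ZMod 2) (fun e : C => v e.1) :=
    fun hli => hC.1.1 ((h.2 C).mpr ⟨hCS, hli⟩)
  obtain ⟨f, hfsupp, hfsum, hfne⟩ := linearDepOn_iff.mp hnli
  rw [Finsupp.mem_supported (ZMod 2) f] at hfsupp
  have hsupp_eq : (↑f.support : Set α) = C := by
    by_contra hne
    have hss : (↑f.support : Set α) ⊂ C := hfsupp.ssubset_of_ne hne
    have hdep : N.Dep ↑f.support :=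
      ⟨fun hind => (linearDepOn_iff.mpr
          ⟨f, (Finsupp.mem_supported (ZMod 2) f).mpr subset_rfl, hfsum, hfne⟩)
          ((h.2 _).mp hind).2,
        (hss.subset.trans hCS).trans h.1.ge⟩
    exact hC.2 _ hss hdep
  have hone : ∀ a ∈ f.support, f a = 1 := by
    intro a ha
    have : f a ≠ 0 := Finsupp.mem_support_iff.mp ha
    revert this; generalize f a = z; revert z; decide
  have hFeq : f.support = hfin.toFinset := by
    apply Finset.coe_injective; rw [hsupp_eq, Set.Finite.coe_toFinset]
  rw [← hFeq]
  calc ∑ a ∈ f.support, v a = ∑ a ∈ f.support, f a • v a := by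
        refine Finset.sum_congr rfl fun a ha => ?_
        rw [hone a ha, one_smul]
    _ = 0 := hfsum

lemma aux_notLI_singleton {α ρ : Type*} {v : α → ρ → ZMod 2} {a : α} (hva : v a = 0) :
    ¬ LinearIndependent (ZMod 2) (fun e : ({a} : Set α) => v e.1) :=
  fun h => h.ne_zero ⟨a, rfl⟩ hva

lemma aux_notLI_triple {α ρ : Type*} {v : α → ρ → ZMod 2} {a b c : α}
    (hab : a ≠ b) (hac : a ≠ c) (hbc : b ≠ c) (hsum : v a + v b + v c = 0) :
    ¬ LinearIndependent (ZMod 2) (fun e : ({a, b, c} : Set α) => v e.1) := by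
  intro hli
  have hli' : LinearIndependent (ZMod 2) (v ∘ ((↑) : ({a, b, c} : Set α) → α)) := hli
  replace hli' := linearIndepOn_iff.mp hli'
  set F : Finset α := {a, b, c} with hF
  have hmemF : ∀ z, z ∈ F ↔ z = a ∨ z = b ∨ z = c := by
    intro z; simp [hF]
  classical
  set f : α →₀ ZMod 2 := ⟨F, fun z => if z ∈ F then 1 else 0, by
    intro z; constructor
    · intro hz; simp [hz]
    · intro hz; by_contra hz'; simp [hz'] at hz⟩ with hf
  have hfa : f a = 1 := by
    show (if a ∈ F then (1 : ZMod 2) else 0) = 1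
    simp [hmemF]
  have hsupp : f ∈ Finsupp.supported (ZMod 2) (ZMod 2) ({a, b, c} : Set α) := by
    rw [Finsupp.mem_supported]
    intro z hz
    have : z ∈ F := hz
    rw [hmemF] at this
    simpa using this
  have hzero : Finsupp.linearCombination (ZMod 2) v f = 0 := by
    rw [Finsupp.linearCombination_apply, Finsupp.sum]
    have hsup : f.support = F := rfl
    rw [hsup]
    have hvals : ∀ z ∈ F, f z • v z = v z := by
      intro z hz
      show (if z ∈ F then (1 : ZMod 2) else 0) • v z = v z
      rw [if_pos hz, one_smul]
    rw [Finset.sum_congr rfl hvals, hF,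
      Finset.sum_insert (by simp [hab, hac]), Finset.sum_pair hbc, ← add_assoc, hsum]
  have := hli' f hsupp hzero
  rw [this] at hfa
  simp at hfa

lemma aux_no_small_dep {α : Type*} {M : Matroid α} {S : Set α}
    (hE : M.E = S) (hconn : KConnected M 4) (hcard : (6 : ℕ∞) ≤ S.encard)
    {T : Set α} (hTS : T ⊆ S) (hT3 : T.encard ≤ 3) (hdep : M.Dep T) : False := by
  obtain ⟨A', hTA, hAS, hA3⟩ :=
    Set.exists_superset_subset_encard_eq hTS hT3 (le_trans (by norm_num) hcard)
  have hAE : A' ⊆ M.E := hE ▸ hAS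
  have hdepA : M.Dep A' := hdep.superset hTA hAE
  have hfinA : A'.Finite := Set.finite_of_encard_eq_coe (by exact_mod_cast hA3)
  have hBcard : (3 : ℕ∞) ≤ (S \ A').encard := by
    have hd := Set.encard_diff_add_encard_of_subset hAS
    rw [hA3] at hd
    by_contra hlt
    rw [not_le] at hlt
    have : S.encard < 6 := by
      rw [← hd]
      calc (S \ A').encard + 3 < 3 + 3 :=
            WithTop.add_lt_add_right (ENat.ofNat_ne_top 3) hlt
        _ = 6 := by norm_num
    exact absurd hcard (not_le.mpr this)
  have hrkA : matroidERk M A' ≤ 2 := by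
    refine iSup_le ?_
    rintro ⟨I, hI, hIA⟩
    show I.encard ≤ 2
    by_contra hgt
    rw [not_le] at hgt
    have h3le : (3 : ℕ∞) ≤ I.encard := by
      have h := (ENat.add_one_le_iff (m := 2) (by norm_num)).mpr hgt
      have h21 : (2 : ℕ∞) + 1 = 3 := by norm_num
      rwa [h21] at h
    have hIeq : I = A' :=
      hfinA.eq_of_subset_of_encard_le' hIA (hA3.le.trans h3le)
    exact hdepA.not_indep (hIeq ▸ hI)
  have hrkB : matroidERk M (S \ A') ≤ matroidERank M := by
    refine iSup_le ?_
    rintro ⟨I, hI, -⟩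
    exact le_iSup_of_le (⟨I, hI, hI.subset_ground⟩ :
      {I : Set α // M.Indep I ∧ I ⊆ M.E}) le_rfl
  refine hconn A' (S \ A') ?_
  have h31 : ((4 - 1 : ℕ) : ℕ∞) = 3 := by norm_num
  refine ⟨disjoint_sdiff_right, by rw [hE, union_diff_cancel hAS], ?_, ?_, ?_⟩
  · rw [h31, hA3]
  · rw [h31]; exact hBcard
  · rw [h31]
    have : (3 : ℕ∞) - 1 = 2 := by
      decide
    rw [this]
    calc matroidERk M A' + matroidERk M (S \ A') ≤ 2 + matroidERank M :=
          add_le_add hrkA hrkB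
      _ = matroidERank M + 2 := add_comm _ _

/-- If `M` is a `4`-connected binary matroid with at least `6` elements, then the
Γ-extension `M^X` has no circuit `C` with `|C| ≤ 3` containing exactly one element of `S`;
in particular, no set `{e, g i, g j}` with `e ∈ S` is a circuit of `M^X`. -/
theorem stmt_16 {α ρ ι : Type*} [Fintype ι] [Nonempty ι]
    (M MX : Matroid α) (S : Set α) (A : α → ρ → ZMod 2) (x g : ι → α)
    (hxinj : Function.Injective x) (hginj : Function.Injective g)
    (hxS : Set.range x ⊆ S) (hdisj : Disjoint S (Set.range g))
    (hXindep : M.Indep (Set.range x))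
    (hM : IsBinaryRep M S A)
    (hMX : IsBinaryRep MX (S ∪ Set.range g) (gammaCols A x g))
    (hMconn : KConnected M 4) (hcard : (6 : ℕ∞) ≤ S.encard) :
    (∀ C : Set α, MatroidCircuit MX C → C.encard ≤ 3 → ¬ ∃ e : α, C ∩ S = {e}) ∧
      (∀ e ∈ S, ∀ i j : ι, ¬ MatroidCircuit MX {e, g i, g j}) := by
  -- values of gammaCols
  have hng : ∀ a ∈ S, ¬ ∃ i, g i = a := by
    rintro a ha ⟨i, rfl⟩
    exact Set.disjoint_left.mp hdisj ha ⟨i, rfl⟩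
  have hvS0 : ∀ a ∈ S, gammaCols A x g a none = 0 := by
    intro a ha; simp only [gammaCols, dif_neg (hng a ha)]; rfl
  have hvSr : ∀ a ∈ S, ∀ r, gammaCols A x g a (some r) = A a r := by
    intro a ha r; simp only [gammaCols, dif_neg (hng a ha)]; rfl
  have hvg1 : ∀ i : ι, gammaCols A x g (g i) none = 1 := by
    intro i
    have hg' : ∃ i', g i' = g i := ⟨i, rfl⟩
    simp only [gammaCols, dif_pos hg']
    rfl
  have hvgr : ∀ (i : ι) (r : ρ), gammaCols A x g (g i) (some r) = A (x i) r := by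
    intro i r
    have hg' : ∃ i', g i' = g i := ⟨i, rfl⟩
    have hch : hg'.choose = i := hginj hg'.choose_spec
    simp only [gammaCols, dif_pos hg', hch]
    rfl
  have part1 : ∀ C : Set α, MatroidCircuit MX C → C.encard ≤ 3 → ¬ ∃ e : α, C ∩ S = {e} := by
    rintro C hC hC3 ⟨e, heC⟩
    have heCm : e ∈ C ∩ S := heC ▸ rfl
    have heCmem : e ∈ C := heCm.1
    have heS : e ∈ S := heCm.2
    have hCfin : C.Finite := Set.finite_of_encard_le_coe (by exact_mod_cast hC3)
    set F := hCfin.toFinset with hFdef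
    have hFC : ∀ a, a ∈ F ↔ a ∈ C := fun a => hCfin.mem_toFinset
    have hsum := aux_circuit_sum hMX hC hCfin
    rw [← hFdef] at hsum
    have hCE : C ⊆ S ∪ Set.range g := hMX.1 ▸ hC.1.2
    have hkey : ∀ a ∈ C, a ≠ e → a ∈ Set.range g := by
      intro a ha hne
      refine (hCE ha).resolve_left fun hS => hne ?_
      have : a ∈ C ∩ S := ⟨ha, hS⟩
      rw [heC] at this; exact this
    have heF : e ∈ F := (hFC e).mpr heCmem
    -- cardinality of F
    have hcardF : F.card ≤ 3 := by
      have := hCfin.encard_eq_coe_toFinset_card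
      rw [this] at hC3
      exact_mod_cast hC3
    have hcardF1 : 1 ≤ F.card := Finset.card_pos.mpr ⟨e, heF⟩
    -- parity from the `none` coordinate
    have hnone : ∑ a ∈ F, gammaCols A x g a none = 0 := by
      have := congrFun hsum none
      rwa [Finset.sum_apply] at this
    have hsplit : ∑ a ∈ F, gammaCols A x g a none
        = ((F.erase e).card : ZMod 2) := by
      rw [← Finset.insert_erase heF, Finset.sum_insert (Finset.notMem_erase e F)]
      rw [hvS0 e heS]
      have : ∀ a ∈ F.erase e, gammaCols A x g a none = 1 := by
        intro a ha
        obtain ⟨i, rfl⟩ := hkey a ((hFC a).mp (Finset.mem_of_mem_erase ha))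
          (Finset.ne_of_mem_erase ha)
        exact hvg1 i
      rw [Finset.sum_congr rfl this, Finset.sum_const, nsmul_eq_mul, mul_one]
      simp
    have hdvd : 2 ∣ (F.erase e).card := by
      rw [hsplit] at hnone
      exact (ZMod.natCast_eq_zero_iff _ 2).mp hnone
    rw [Finset.card_erase_of_mem heF] at hdvd
    have hF13 : F.card = 1 ∨ F.card = 3 := by omega
    rcases hF13 with h1 | h3
    · -- C = {e}, so the column of e is zero, hence A e = 0 and {e} is dependent in M
      obtain ⟨a, ha⟩ := Finset.card_eq_one.mp h1
      have hae : a = e := by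
        have := heF; rw [ha] at this; exact (Finset.mem_singleton.mp this).symm
      rw [ha, hae, Finset.sum_singleton] at hsum
      have hAe : A e = 0 := by
        funext r
        show A e r = 0
        have := congrFun hsum (some r)
        rwa [hvSr e heS r] at this
      have hdep : M.Dep {e} :=
        ⟨fun hind => aux_notLI_singleton hAe ((hM.2 _).mp hind).2,
          by rw [hM.1]; exact Set.singleton_subset_iff.mpr heS⟩
      exact aux_no_small_dep hM.1 hMconn hcard (Set.singleton_subset_iff.mpr heS)
        (by rw [Set.encard_singleton]; norm_num) hdep
    · -- |C| = 3 : C = {e, g i, g j}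
      have h2 : (F.erase e).card = 2 := by
        rw [Finset.card_erase_of_mem heF, h3]
      obtain ⟨a, b, hab, hFe⟩ := Finset.card_eq_two.mp h2
      have haC : a ∈ F.erase e := by rw [hFe]; simp
      have hbC : b ∈ F.erase e := by rw [hFe]; simp
      obtain ⟨i, hi⟩ := hkey a ((hFC a).mp (Finset.mem_of_mem_erase haC))
        (Finset.ne_of_mem_erase haC)
      obtain ⟨j, hj⟩ := hkey b ((hFC b).mp (Finset.mem_of_mem_erase hbC))
        (Finset.ne_of_mem_erase hbC)
      have hij : i ≠ j := by
        rintro rfl; rw [hi] at hj; exact hab hj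
      have hxij : x i ≠ x j := fun h => hij (hxinj h)
      have hsum3 : gammaCols A x g e + (gammaCols A x g (g i) + gammaCols A x g (g j)) = 0 := by
        rw [← Finset.insert_erase heF, hFe] at hsum
        rw [Finset.sum_insert (by
          intro hmem
          rcases Finset.mem_insert.mp hmem with h | h
          · exact (Finset.ne_of_mem_erase haC) h.symm
          · exact (Finset.ne_of_mem_erase hbC) (Finset.mem_singleton.mp h).symm),
          Finset.sum_pair hab, ← hi, ← hj] at hsum
        exact hsum
      have hrel : ∀ r, A e r + A (x i) r + A (x j) r = 0 := by
        intro r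
        have h := congrFun hsum3 (some r)
        rw [Pi.add_apply, Pi.add_apply, hvSr e heS r, hvgr i r, hvgr j r] at h
        rw [add_assoc]
        exact h
      have hXli : LinearIndependent (ZMod 2) (fun e : Set.range x => A e.1) :=
        ((hM.2 _).mp hXindep).2
      have hsolve1 : ∀ z w : ZMod 2, z + z + w = 0 → w = 0 := by decide
      have hsolve2 : ∀ z w : ZMod 2, z + w + z = 0 → w = 0 := by decide
      by_cases h1 : e = x i
      · have : A (x j) = 0 := by
          funext r
          show A (x j) r = 0
          have h := hrel r
          rw [h1] at h
          exact hsolve1 _ _ h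
        exact hXli.ne_zero ⟨x j, ⟨j, rfl⟩⟩ this
      by_cases h2' : e = x j
      · have : A (x i) = 0 := by
          funext r
          show A (x i) r = 0
          have h := hrel r
          rw [h2'] at h
          exact hsolve2 _ _ h
        exact hXli.ne_zero ⟨x i, ⟨i, rfl⟩⟩ this
      · have hTsum : A e + A (x i) + A (x j) = 0 := by
          funext r
          simpa using hrel r
        have hTS' : ({e, x i, x j} : Set α) ⊆ S := by
          intro z hz
          rcases hz with rfl | rfl | rfl
          · exact heS
          · exact hxS ⟨i, rfl⟩
          · exact hxS ⟨j, rfl⟩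
        have hdep : M.Dep {e, x i, x j} :=
          ⟨fun hind => aux_notLI_triple h1 h2' hxij hTsum ((hM.2 _).mp hind).2,
            by rw [hM.1]; exact hTS'⟩
        have henc : ({e, x i, x j} : Set α).encard ≤ 3 := by
          calc ({e, x i, x j} : Set α).encard ≤ ({x i, x j} : Set α).encard + 1 :=
                Set.encard_insert_le _ _
            _ ≤ (({x j} : Set α).encard + 1) + 1 :=
                add_le_add_left (Set.encard_insert_le _ _) 1
            _ = 3 := by rw [Set.encard_singleton]; rfl
        exact aux_no_small_dep hM.1 hMconn hcard hTS' henc hdep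
  refine ⟨part1, ?_⟩
  intro e he i j hcirc
  refine part1 {e, g i, g j} hcirc ?_ ⟨e, ?_⟩
  · calc ({e, g i, g j} : Set α).encard ≤ ({g i, g j} : Set α).encard + 1 :=
        Set.encard_insert_le _ _
      _ ≤ (({g j} : Set α).encard + 1) + 1 :=
        add_le_add_left (Set.encard_insert_le _ _) 1
      _ = 3 := by rw [Set.encard_singleton]; rfl
  · ext z
    simp only [Set.mem_inter_iff, Set.mem_insert_iff, Set.mem_singleton_iff]
    constructor
    · rintro ⟨rfl | rfl | rfl, hzS⟩
      · rfl
      · exact absurd hzS (Set.disjoint_left.mp (hdisj.symm) ⟨i, rfl⟩)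
      · exact absurd hzS (Set.disjoint_left.mp (hdisj.symm) ⟨j, rfl⟩)
    · rintro rfl
      exact ⟨Or.inl rfl, he⟩
end
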